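/- arXiv:1508.00249 — 2 statements merged into one kernel-verified Lean document; each statement's English description precedes it below -/
import Mathlib

section
/- (Lemma: evaluation of the quantities A₁,…,A₄ for Haar kernels.) Let k ≤ k' be positive integers, f a bounded probability density on [0,1], X_1,…,X_n i.i.d. with density f, G(x,y) = K_{k'}(x,y) − K_k(x,y), and H its completely degenerate part H(x,y) = G(x,y) − ∫₀¹G(x,y')f(y')dy' − ∫₀¹G(x',y)f(x')dx' + ∫₀¹∫₀¹ G f f. With A₁² = n(n−1)·E_f[H(X₁,X₂)²], A₂ = sup{ |E_f[Σ_{i=1}^n Σ_{j=1}^{i−1} H(X₁,X₂)a_i(X₁)b_j(X₂)]| : E_f[Σ a_i(X₁)²] ≤ 1, E_f[Σ b_j(X₂)²] ≤ 1 }, A₃² = n·sup_x E_f[H(x,X₂)²], A₄ = sup_{x,y}|H(x,y)|, there exists a constant C depending only on sup_{[0,1]} f such that A₁² ≤ C·n(n−1)·(k' + k), A₂ ≤ C·n, A₃² ≤ C·n·(k' + k), and A₄ ≤ C·(k' + k). -/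
open MeasureTheory Set Filter
open scoped Classical

noncomputable section

/-- Indicator of the interval ((j)/k, (j+1)/k] (0-indexed version of ((j-1)/k, j/k], j=1..k). -/
def haarInd (k j : ℕ) (x : ℝ) : ℝ :=
  if x ∈ Set.Ioc ((j : ℝ) / k) (((j : ℝ) + 1) / k) then 1 else 0

/-- Haar function ψ_{k,j} (0-indexed). -/
def haarFun (k j : ℕ) (x : ℝ) : ℝ := Real.sqrt k * haarInd k j x

/-- Haar projection kernel K_k(x,y) = k·Σ_j 1{x ∈ I_j}1{y ∈ I_j}. -/
def haarKernel (k : ℕ) (x y : ℝ) : ℝ :=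
  (k : ℝ) * ∑ j ∈ Finset.range k, haarInd k j x * haarInd k j y

/-- Haar projection f_k(x) = ∫₀¹ K_k(x,y) f(y) dy. -/
def haarProj (k : ℕ) (f : ℝ → ℝ) (x : ℝ) : ℝ :=
  ∫ y in Set.Icc (0:ℝ) 1, haarKernel k x y * f y

/-- f is a probability density on [0,1]. -/
def IsDensity (f : ℝ → ℝ) : Prop :=
  Measurable f ∧ (∀ x ∈ Set.Icc (0:ℝ) 1, 0 ≤ f x) ∧ (∫ x in Set.Icc (0:ℝ) 1, f x) = 1

/-- Law of an i.i.d. n-sample X_1,…,X_n from density f on [0,1]. -/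
def sampleMeasure (f : ℝ → ℝ) (n : ℕ) : Measure (Fin n → ℝ) :=
  (Measure.pi fun _ : Fin n => volume.restrict (Set.Icc (0:ℝ) 1)).withDensity
    (fun X => ∏ i, ENNReal.ofReal (f (X i)))

/-- Hölder ball H(β,L) of functions on [0,1]. -/
def holderBall (β L : ℝ) : Set (ℝ → ℝ) :=
  {h | (∀ x ∈ Set.Icc (0:ℝ) 1, |h x| ≤ L) ∧
    ∀ x ∈ Set.Icc (0:ℝ) 1, ∀ y ∈ Set.Icc (0:ℝ) 1, |h x - h y| ≤ L * |x - y| ^ β}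

/-- Second-order Haar U-statistic U_n^{(k)}. -/
def Ustat (k n : ℕ) (X : Fin n → ℝ) : ℝ :=
  (1 / ((n : ℝ) * ((n : ℝ) - 1))) *
    ∑ i : Fin n, ∑ j : Fin n, if i ≠ j then haarKernel k (X i) (X j) else 0

/-- Third-order V-statistic over distinct triples. -/
def V3 (n : ℕ) (h : ℝ → ℝ → ℝ → ℝ) (X : Fin n → ℝ) : ℝ :=
  (1 / ((n : ℝ) * ((n : ℝ) - 1) * ((n : ℝ) - 2))) *
    ∑ i1 : Fin n, ∑ i2 : Fin n, ∑ i3 : Fin n,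
      if i1 ≠ i2 ∧ i1 ≠ i3 ∧ i2 ≠ i3 then h (X i1) (X i2) (X i3) else 0

/-- Third-order U-statistic estimator of ∫ f³ built from Haar projection kernels. -/
def phiHat (k1 k2 k3 n : ℕ) (X : Fin n → ℝ) : ℝ :=
  V3 n (fun x1 x2 x3 => ∫ x in Set.Icc (0:ℝ) 1,
      haarKernel k1 x x1 * haarKernel k1 x x2 * haarKernel k1 x x3) X
  + 3 * V3 n (fun x1 x2 x3 => ∫ x in Set.Icc (0:ℝ) 1,
      haarKernel k1 x x1 * (haarKernel k3 x x2 - haarKernel k1 x x2) * haarKernel k1 x x3) X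
  + 3 * V3 n (fun x1 x2 x3 => ∫ x in Set.Icc (0:ℝ) 1,
      haarKernel k1 x x1 * (haarKernel k3 x x2 - haarKernel k1 x x2) *
        (haarKernel k3 x x3 - haarKernel k1 x x3)) X
  + 3 * V3 n (fun x1 x2 x3 => ∫ x in Set.Icc (0:ℝ) 1,
      (haarKernel k2 x x1 - haarKernel k1 x x1) * (haarKernel k2 x x2 - haarKernel k1 x x2) *
        (haarKernel k3 x x3 - haarKernel k2 x x3)) X
  + V3 n (fun x1 x2 x3 => ∫ x in Set.Icc (0:ℝ) 1,
      (haarKernel k2 x x1 - haarKernel k1 x x1) * (haarKernel k2 x x2 - haarKernel k1 x x2) *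
        (haarKernel k2 x x3 - haarKernel k1 x x3)) X

/-- N = largest integer with d^{N-1} ≤ n^{1-2/log log n}. -/
def gridN (d : ℝ) (n : ℕ) : ℕ :=
  Nat.findGreatest (fun N => d ^ (N - 1) ≤ (n : ℝ) ^ (1 - 2 / Real.log (Real.log n))) n

/-- β_j solving d^j·n = n^{2/(1+4β_j)}. -/
def gridBeta (d : ℝ) (n j : ℕ) : ℝ :=
  (2 * Real.log n / Real.log (d ^ j * (n : ℝ)) - 1) / 4

/-- k_j* = (n²/log n)^{1/(1+4β_j)}. -/
def gridKstar (d : ℝ) (n : ℕ) (j : ℕ) : ℝ :=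
  ((n : ℝ) ^ 2 / Real.log n) ^ (1 / (1 + 4 * gridBeta d n j))

/-- s* = smallest j with k_j* ≥ n. -/
def gridS (d : ℝ) (n : ℕ) : ℕ := sInf {j : ℕ | (n : ℝ) ≤ gridKstar d n j}

/-- The Lepski selector ĵ based on the Haar quadratic U-statistics. -/
def lepskiJ (d Copt : ℝ) (n : ℕ) (X : Fin n → ℝ) : ℕ :=
  sInf {j : ℕ | gridS d n ≤ j ∧ j ≤ gridN d n - 1 ∧
    ∀ l : ℕ, j ≤ l → l ≤ gridN d n - 1 →
      (Ustat (⌈gridKstar d n l⌉₊) n X - Ustat (⌈gridKstar d n j⌉₊) n X) ^ 2 ≤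
        Copt ^ 2 * Real.log n * (gridKstar d n l / (n : ℝ) ^ 2)}

/-- Completely degenerate part H of G = K_{k'} − K_k under density f. -/
def degKernel (k k' : ℕ) (f : ℝ → ℝ) (x y : ℝ) : ℝ :=
  (haarKernel k' x y - haarKernel k x y)
  - (∫ y' in Set.Icc (0:ℝ) 1, (haarKernel k' x y' - haarKernel k x y') * f y')
  - (∫ x' in Set.Icc (0:ℝ) 1, (haarKernel k' x' y - haarKernel k x' y) * f x')
  + ∫ x' in Set.Icc (0:ℝ) 1, ∫ y' in Set.Icc (0:ℝ) 1,
      (haarKernel k' x' y' - haarKernel k x' y') * f x' * f y'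


/-- A₁ with A₁² = n(n−1)·E_f[H(X₁,X₂)²]. -/
def quadA1 (k k' n : ℕ) (f : ℝ → ℝ) : ℝ :=
  Real.sqrt ((n : ℝ) * ((n : ℝ) - 1) *
    ∫ x in Set.Icc (0:ℝ) 1, ∫ y in Set.Icc (0:ℝ) 1, degKernel k k' f x y ^ 2 * f x * f y)

/-- A₂ : the supremum of bilinear-form expectations over L²-normalized families. -/
def quadA2 (k k' n : ℕ) (f : ℝ → ℝ) : ℝ :=
  sSup {r : ℝ | ∃ a b : ℕ → ℝ → ℝ,
    (∀ i, Measurable (a i)) ∧ (∀ j, Measurable (b j)) ∧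
    (∫ x in Set.Icc (0:ℝ) 1, (∑ i ∈ Finset.range n, a i x ^ 2) * f x) ≤ 1 ∧
    (∫ y in Set.Icc (0:ℝ) 1, (∑ j ∈ Finset.range n, b j y ^ 2) * f y) ≤ 1 ∧
    r = |∫ x in Set.Icc (0:ℝ) 1, ∫ y in Set.Icc (0:ℝ) 1,
          degKernel k k' f x y *
            (∑ i ∈ Finset.range n, ∑ j ∈ Finset.range i, a i x * b j y) * f x * f y|}

/-- A₃ with A₃² = n·sup_x E_f[H(x,X₂)²]. -/
def quadA3 (k k' n : ℕ) (f : ℝ → ℝ) : ℝ :=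
  Real.sqrt ((n : ℝ) *
    ⨆ x : ℝ, ∫ y in Set.Icc (0:ℝ) 1, degKernel k k' f x y ^ 2 * f y)

/-- A₄ = sup_{x,y} |H(x,y)|. -/
def quadA4 (k k' : ℕ) (f : ℝ → ℝ) : ℝ :=
  ⨆ x : ℝ, ⨆ y : ℝ, |degKernel k k' f x y|

namespace HaarAux

lemma haarInd_nonneg (k j : ℕ) (x : ℝ) : 0 ≤ haarInd k j x := by
  unfold haarInd; split <;> norm_num

lemma haarInd_le_one (k j : ℕ) (x : ℝ) : haarInd k j x ≤ 1 := by
  unfold haarInd; split <;> norm_num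

lemma haarInd_mul_self (k j : ℕ) (x : ℝ) : haarInd k j x * haarInd k j x = haarInd k j x := by
  unfold haarInd; split <;> norm_num

lemma sqrt_haarInd (k j : ℕ) (x : ℝ) : Real.sqrt (haarInd k j x) = haarInd k j x := by
  unfold haarInd; split <;> simp

lemma measurable_haarInd (k j : ℕ) : Measurable (haarInd k j) := by
  unfold haarInd
  exact Measurable.ite measurableSet_Ioc measurable_const measurable_const

lemma sum_haarInd_eq (k : ℕ) (hk : 0 < k) (m : ℕ) (x : ℝ) :
    ∑ j ∈ Finset.range m, haarInd k j x
      = if x ∈ Set.Ioc (0 : ℝ) ((m : ℝ) / k) then 1 else 0 := by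
  have hkp : (0 : ℝ) < k := by exact_mod_cast hk
  induction m with
  | zero => simp
  | succ m ih =>
    rw [Finset.sum_range_succ, ih]
    have h1 : ((m : ℝ)) / k ≤ ((m : ℝ) + 1) / k := by
      gcongr
      linarith
    have h0 : (0 : ℝ) ≤ (m : ℝ) / k := by positivity
    unfold haarInd
    push_cast
    by_cases hx0 : 0 < x <;> by_cases hxa : x ≤ (m : ℝ) / k <;>
      by_cases hxb : x ≤ ((m : ℝ) + 1) / k <;>
      simp [Set.mem_Ioc, hx0, hxa, hxb] <;> first | linarith | (intro h; linarith)

lemma sum_haarInd_le_one (k : ℕ) (hk : 0 < k) (x : ℝ) :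
    ∑ j ∈ Finset.range k, haarInd k j x ≤ 1 := by
  rw [sum_haarInd_eq k hk k x]; split <;> norm_num

lemma sum_prod_nonneg (k : ℕ) (x y : ℝ) :
    0 ≤ ∑ j ∈ Finset.range k, haarInd k j x * haarInd k j y :=
  Finset.sum_nonneg fun j _ => mul_nonneg (haarInd_nonneg _ _ _) (haarInd_nonneg _ _ _)

lemma sum_prod_le_one (k : ℕ) (hk : 0 < k) (x y : ℝ) :
    ∑ j ∈ Finset.range k, haarInd k j x * haarInd k j y ≤ 1 := by
  refine le_trans (Finset.sum_le_sum fun j _ => ?_) (sum_haarInd_le_one k hk x)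
  exact mul_le_of_le_one_right (haarInd_nonneg _ _ _) (haarInd_le_one _ _ _)

lemma haarKernel_nonneg (k : ℕ) (x y : ℝ) : 0 ≤ haarKernel k x y :=
  mul_nonneg (Nat.cast_nonneg k) (sum_prod_nonneg k x y)

lemma haarKernel_le (k : ℕ) (hk : 0 < k) (x y : ℝ) : haarKernel k x y ≤ k := by
  unfold haarKernel
  nlinarith [sum_prod_le_one k hk x y, (Nat.cast_pos (α := ℝ)).mpr hk]

lemma haarKernel_sq_le (k : ℕ) (hk : 0 < k) (x y : ℝ) :
    haarKernel k x y ^ 2 ≤ (k : ℝ) * haarKernel k x y := by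
  unfold haarKernel
  set s := ∑ j ∈ Finset.range k, haarInd k j x * haarInd k j y with hs
  have h1 : s ≤ 1 := sum_prod_le_one k hk x y
  have h0 : 0 ≤ s := sum_prod_nonneg k x y
  have hk0 : (0:ℝ) ≤ k := Nat.cast_nonneg k
  have : s ^ 2 ≤ s := by nlinarith
  nlinarith [sq_nonneg ((k:ℝ))]

lemma haarKernel_symm (k : ℕ) (x y : ℝ) : haarKernel k x y = haarKernel k y x := by
  unfold haarKernel
  congr 1
  exact Finset.sum_congr rfl fun j _ => mul_comm _ _

lemma measurable_haarKernel_right (k : ℕ) (x : ℝ) : Measurable (fun y => haarKernel k x y) := by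
  unfold haarKernel
  exact (Finset.measurable_sum _ fun j _ =>
    (measurable_const.mul (measurable_haarInd k j))).const_mul _

lemma measurable_haarKernel_prod (k : ℕ) :
    Measurable (fun p : ℝ × ℝ => haarKernel k p.1 p.2) := by
  unfold haarKernel
  exact (Finset.measurable_sum _ fun j _ =>
    ((measurable_haarInd k j).comp measurable_fst).mul
      ((measurable_haarInd k j).comp measurable_snd)).const_mul _

end HaarAux

namespace HaarAux2
open HaarAux

local notation "μ01" => (volume.restrict (Set.Icc (0:ℝ) 1))

instance : IsFiniteMeasure (volume.restrict (Set.Icc (0:ℝ) 1)) := by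
  constructor
  rw [Measure.restrict_apply_univ]
  simp [Real.volume_Icc]

variable {f : ℝ → ℝ} {F : ℝ}

lemma integrable_f (hd : IsDensity f) : Integrable f μ01 := by
  by_contra h
  have h2 := hd.2.2
  rw [integral_undef h] at h2
  norm_num at h2

lemma f_ae_nonneg (hd : IsDensity f) : ∀ᵐ x ∂μ01, 0 ≤ f x :=
  (ae_restrict_iff' measurableSet_Icc).mpr (ae_of_all _ fun x hx => hd.2.1 x hx)

lemma int_bdd_mul (hd : IsDensity f) {g : ℝ → ℝ} {M : ℝ} (hg : Measurable g)
    (hM : ∀ x, |g x| ≤ M) : Integrable (fun x => g x * f x) μ01 :=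
  (integrable_f hd).bdd_mul hg.aestronglyMeasurable (ae_of_all _ fun x => hM x)

lemma abs_haarKernel_le (k : ℕ) (x y : ℝ) : |haarKernel k x y| ≤ k := by
  rcases Nat.eq_zero_or_pos k with h | h
  · subst h; simp [haarKernel]
  · exact abs_le.mpr ⟨by nlinarith [haarKernel_nonneg k x y, (Nat.cast_nonneg k : (0:ℝ) ≤ k)],
      haarKernel_le k h x y⟩

lemma integrable_haarInd_f (hd : IsDensity f) (k j : ℕ) :
    Integrable (fun y => haarInd k j y * f y) μ01 :=
  int_bdd_mul hd (measurable_haarInd k j) (M := 1) (fun x => by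
    rw [abs_of_nonneg (haarInd_nonneg k j x)]; exact haarInd_le_one k j x)

lemma integrable_haarKernel_f (hd : IsDensity f) (k : ℕ) (x : ℝ) :
    Integrable (fun y => haarKernel k x y * f y) μ01 :=
  int_bdd_mul hd (measurable_haarKernel_right k x) (fun y => abs_haarKernel_le k x y)

lemma integral_haarInd_f_nonneg (hd : IsDensity f) (k j : ℕ) :
    0 ≤ ∫ y in Set.Icc (0:ℝ) 1, haarInd k j y * f y :=
  setIntegral_nonneg measurableSet_Icc fun y hy =>
    mul_nonneg (haarInd_nonneg k j y) (hd.2.1 y hy)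

lemma integral_haarInd (k j : ℕ) (hk : 0 < k) :
    ∫ y in Set.Icc (0:ℝ) 1, haarInd k j y ≤ 1 / k := by
  have hkp : (0:ℝ) < k := by exact_mod_cast hk
  have hrepr : haarInd k j = (Set.Ioc ((j:ℝ)/k) (((j:ℝ)+1)/k)).indicator (fun _ => (1:ℝ)) := by
    funext x
    simp [haarInd, Set.indicator]
  rw [hrepr, integral_indicator measurableSet_Ioc]
  rw [setIntegral_const]
  have h1 : (volume (Set.Ioc ((j:ℝ)/k) (((j:ℝ)+1)/k) ∩ Set.Icc 0 1)).toReal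
      ≤ (volume (Set.Ioc ((j:ℝ)/k) (((j:ℝ)+1)/k))).toReal := by
    apply ENNReal.toReal_mono
    · rw [Real.volume_Ioc]; exact ENNReal.ofReal_ne_top
    · exact measure_mono Set.inter_subset_left
  have h2 : (volume (Set.Ioc ((j:ℝ)/k) (((j:ℝ)+1)/k))).toReal = 1 / k := by
    have he : ((j:ℝ)+1)/(k:ℝ) - (j:ℝ)/(k:ℝ) = 1/(k:ℝ) := by ring
    rw [Real.volume_Ioc, he, ENNReal.toReal_ofReal (by positivity)]
  simp only [smul_eq_mul, mul_one]
  calc (μ01 (Set.Ioc ((j:ℝ)/k) (((j:ℝ)+1)/k))).toReal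
      = (volume (Set.Ioc ((j:ℝ)/k) (((j:ℝ)+1)/k) ∩ Set.Icc 0 1)).toReal := by
        rw [Measure.restrict_apply measurableSet_Ioc]
    _ ≤ 1 / k := le_trans h1 (le_of_eq h2)

lemma integrable_haarInd (k j : ℕ) : Integrable (haarInd k j) μ01 := by
  refine ⟨(measurable_haarInd k j).aestronglyMeasurable, ?_⟩
  apply HasFiniteIntegral.of_bounded (C := 1)
  exact ae_of_all _ fun x => by
    rw [Real.norm_eq_abs, abs_of_nonneg (haarInd_nonneg k j x)]
    exact haarInd_le_one k j x

lemma integral_haarInd_f_le (hd : IsDensity f) (hfF : ∀ x ∈ Set.Icc (0:ℝ) 1, f x ≤ F)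
    (hF0 : 0 ≤ F) (k j : ℕ) (hk : 0 < k) :
    ∫ y in Set.Icc (0:ℝ) 1, haarInd k j y * f y ≤ F / k := by
  have hkp : (0:ℝ) < k := by exact_mod_cast hk
  calc ∫ y in Set.Icc (0:ℝ) 1, haarInd k j y * f y
      ≤ ∫ y in Set.Icc (0:ℝ) 1, F * haarInd k j y := by
        apply integral_mono_of_nonneg
        · exact (f_ae_nonneg hd).mono fun y hy => mul_nonneg (haarInd_nonneg k j y) hy
        · exact (integrable_haarInd k j).const_mul F
        · refine (ae_restrict_iff' measurableSet_Icc).mpr (ae_of_all _ fun y hy => ?_)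
          calc haarInd k j y * f y ≤ haarInd k j y * F :=
                mul_le_mul_of_nonneg_left (hfF y hy) (haarInd_nonneg k j y)
            _ = F * haarInd k j y := mul_comm _ _
    _ = F * ∫ y in Set.Icc (0:ℝ) 1, haarInd k j y := integral_const_mul _ _
    _ ≤ F * (1 / k) := mul_le_mul_of_nonneg_left (integral_haarInd k j hk) hF0
    _ = F / k := by ring

lemma integral_haarKernel_f_nonneg (hd : IsDensity f) (k : ℕ) (x : ℝ) :
    0 ≤ ∫ y in Set.Icc (0:ℝ) 1, haarKernel k x y * f y :=
  setIntegral_nonneg measurableSet_Icc fun y hy =>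
    mul_nonneg (haarKernel_nonneg k x y) (hd.2.1 y hy)

lemma haarKernel_mul_expand (k : ℕ) (x : ℝ) (g : ℝ → ℝ) :
    (fun y => haarKernel k x y * g y)
      = fun y => ∑ j ∈ Finset.range k, ((k:ℝ) * haarInd k j x) * (haarInd k j y * g y) := by
  funext y
  simp only [haarKernel, Finset.mul_sum, Finset.sum_mul]
  exact Finset.sum_congr rfl fun j _ => by ring

lemma integral_haarKernel_mul (hd : IsDensity f) (k : ℕ) (x : ℝ) (g : ℝ → ℝ)
    (hint : ∀ j, Integrable (fun y => haarInd k j y * g y) μ01) :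
    ∫ y in Set.Icc (0:ℝ) 1, haarKernel k x y * g y
      = ∑ j ∈ Finset.range k, ((k:ℝ) * haarInd k j x) *
          ∫ y in Set.Icc (0:ℝ) 1, haarInd k j y * g y := by
  rw [haarKernel_mul_expand k x g,
    integral_finset_sum _ (fun j _ => (hint j).const_mul _)]
  exact Finset.sum_congr rfl fun j _ => integral_const_mul _ _

lemma integral_haarKernel_f_le (hd : IsDensity f) (hfF : ∀ x ∈ Set.Icc (0:ℝ) 1, f x ≤ F)
    (hF0 : 0 ≤ F) (k : ℕ) (hk : 0 < k) (x : ℝ) :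
    ∫ y in Set.Icc (0:ℝ) 1, haarKernel k x y * f y ≤ F := by
  have hkp : (0:ℝ) < k := by exact_mod_cast hk
  rw [integral_haarKernel_mul hd k x f (fun j => integrable_haarInd_f hd k j)]
  calc ∑ j ∈ Finset.range k, ((k:ℝ) * haarInd k j x) *
          ∫ y in Set.Icc (0:ℝ) 1, haarInd k j y * f y
      ≤ ∑ j ∈ Finset.range k, ((k:ℝ) * haarInd k j x) * (F / k) := by
        refine Finset.sum_le_sum fun j _ => ?_
        exact mul_le_mul_of_nonneg_left (integral_haarInd_f_le hd hfF hF0 k j hk)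
          (mul_nonneg (Nat.cast_nonneg k) (haarInd_nonneg k j x))
    _ = ∑ j ∈ Finset.range k, F * haarInd k j x := by
        refine Finset.sum_congr rfl fun j _ => ?_
        field_simp
    _ = F * ∑ j ∈ Finset.range k, haarInd k j x := by rw [Finset.mul_sum]
    _ ≤ F * 1 := mul_le_mul_of_nonneg_left (sum_haarInd_le_one k hk x) hF0
    _ = F := mul_one F

end HaarAux2

namespace HaarAux3
open HaarAux HaarAux2

local notation "μ01" => (volume.restrict (Set.Icc (0:ℝ) 1))

def gOne (k k' : ℕ) (f : ℝ → ℝ) (x : ℝ) : ℝ :=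
  ∫ y' in Set.Icc (0:ℝ) 1, (haarKernel k' x y' - haarKernel k x y') * f y'

def gTwo (k k' : ℕ) (f : ℝ → ℝ) (y : ℝ) : ℝ :=
  ∫ x' in Set.Icc (0:ℝ) 1, (haarKernel k' x' y - haarKernel k x' y) * f x'

def ccC (k k' : ℕ) (f : ℝ → ℝ) : ℝ :=
  ∫ x' in Set.Icc (0:ℝ) 1, ∫ y' in Set.Icc (0:ℝ) 1,
      (haarKernel k' x' y' - haarKernel k x' y') * f x' * f y'

variable {f : ℝ → ℝ} {F : ℝ} {k k' : ℕ}

lemma degKernel_eq (x y : ℝ) :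
    degKernel k k' f x y = (haarKernel k' x y - haarKernel k x y)
      - gOne k k' f x - gTwo k k' f y + ccC k k' f := rfl

lemma gTwo_eq_gOne : gTwo k k' f = gOne k k' f := by
  funext y
  unfold gOne gTwo
  congr 1
  funext x'
  rw [haarKernel_symm k', haarKernel_symm k]

lemma gOne_eq (hd : IsDensity f) (x : ℝ) :
    gOne k k' f x = (∫ y in Set.Icc (0:ℝ) 1, haarKernel k' x y * f y)
      - ∫ y in Set.Icc (0:ℝ) 1, haarKernel k x y * f y := by
  unfold gOne
  rw [← integral_sub (integrable_haarKernel_f hd k' x) (integrable_haarKernel_f hd k x)]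
  congr 1
  funext y
  ring

lemma abs_gOne_le (hd : IsDensity f) (hfF : ∀ x ∈ Set.Icc (0:ℝ) 1, f x ≤ F) (hF0 : 0 ≤ F)
    (hk : 0 < k) (hk' : 0 < k') (x : ℝ) : |gOne k k' f x| ≤ F := by
  rw [gOne_eq hd x]
  have h1 := integral_haarKernel_f_nonneg hd k' x
  have h2 := integral_haarKernel_f_nonneg hd k x
  have h3 := integral_haarKernel_f_le hd hfF hF0 k' hk' x
  have h4 := integral_haarKernel_f_le hd hfF hF0 k hk x
  exact abs_le.mpr ⟨by linarith, by linarith⟩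

lemma measurable_gOne (hd : IsDensity f) : Measurable (gOne k k' f) := by
  have : Measurable fun p : ℝ × ℝ =>
      (haarKernel k' p.1 p.2 - haarKernel k p.1 p.2) * f p.2 :=
    ((measurable_haarKernel_prod k').sub (measurable_haarKernel_prod k)).mul
      (hd.1.comp measurable_snd)
  exact (this.stronglyMeasurable.integral_prod_right').measurable

lemma integrable_f_mul_gOne (hd : IsDensity f) (hfF : ∀ x ∈ Set.Icc (0:ℝ) 1, f x ≤ F)
    (hF0 : 0 ≤ F) (hk : 0 < k) (hk' : 0 < k') :
    Integrable (fun x => gOne k k' f x * f x) μ01 :=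
  int_bdd_mul hd (measurable_gOne hd) (abs_gOne_le hd hfF hF0 hk hk')

lemma ccC_eq (x : ℝ) : ccC k k' f = ∫ x' in Set.Icc (0:ℝ) 1, gOne k k' f x' * f x' := by
  unfold ccC gOne
  congr 1
  funext x'
  rw [← integral_mul_const]
  congr 1
  funext y'
  ring

lemma abs_ccC_le (hd : IsDensity f) (hfF : ∀ x ∈ Set.Icc (0:ℝ) 1, f x ≤ F) (hF0 : 0 ≤ F)
    (hk : 0 < k) (hk' : 0 < k') : |ccC k k' f| ≤ F := by
  rw [ccC_eq 0]
  calc |∫ x' in Set.Icc (0:ℝ) 1, gOne k k' f x' * f x'|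
      ≤ ∫ x' in Set.Icc (0:ℝ) 1, |gOne k k' f x'| * |f x'| := by
        simpa [Real.norm_eq_abs] using
          norm_integral_le_integral_norm (μ := μ01) (fun x' => gOne k k' f x' * f x')
    _ ≤ ∫ x' in Set.Icc (0:ℝ) 1, F * f x' := by
        apply integral_mono_of_nonneg
          (ae_of_all _ fun x' => mul_nonneg (abs_nonneg _) (abs_nonneg _))
          ((integrable_f hd).const_mul F)
        refine (f_ae_nonneg hd).mono fun x' hx' => ?_
        show |gOne k k' f x'| * |f x'| ≤ F * f x'
        rw [abs_of_nonneg hx']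
        exact mul_le_mul_of_nonneg_right (abs_gOne_le hd hfF hF0 hk hk' x') hx'
    _ = F := by rw [integral_const_mul, hd.2.2, mul_one]

lemma abs_degKernel_le (hd : IsDensity f) (hfF : ∀ x ∈ Set.Icc (0:ℝ) 1, f x ≤ F) (hF0 : 0 ≤ F)
    (hk : 0 < k) (hk' : 0 < k') (x y : ℝ) :
    |degKernel k k' f x y| ≤ ((k':ℝ) + k) + 3 * F := by
  rw [degKernel_eq, gTwo_eq_gOne]
  have hG : |haarKernel k' x y - haarKernel k x y| ≤ (k':ℝ) + k := by
    have h1 := haarKernel_nonneg k' x y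
    have h2 := haarKernel_nonneg k x y
    have h3 := haarKernel_le k' hk' x y
    have h4 := haarKernel_le k hk x y
    exact abs_le.mpr ⟨by linarith, by linarith⟩
  have hg1 := abs_le.mp (abs_gOne_le hd hfF hF0 hk hk' x)
  have hg2 := abs_le.mp (abs_gOne_le hd hfF hF0 hk hk' y)
  have hcc := abs_le.mp (abs_ccC_le hd hfF hF0 hk hk')
  have hG' := abs_le.mp hG
  exact abs_le.mpr ⟨by linarith [hG'.1, hg1.2, hg2.2, hcc.1], by
    linarith [hG'.2, hg1.1, hg2.1, hcc.2]⟩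

lemma measurable_degKernel_right (hd : IsDensity f) (x : ℝ) :
    Measurable (fun y => degKernel k k' f x y) := by
  simp only [degKernel_eq, gTwo_eq_gOne]
  exact ((((measurable_haarKernel_right k' x).sub (measurable_haarKernel_right k x)).sub
    measurable_const).sub (measurable_gOne hd)).add measurable_const

lemma degKernel_sq_pointwise (hd : IsDensity f) (hfF : ∀ x ∈ Set.Icc (0:ℝ) 1, f x ≤ F)
    (hF0 : 0 ≤ F) (hk : 0 < k) (hk' : 0 < k') (x y : ℝ) :
    degKernel k k' f x y ^ 2 ≤ 8 * k' * haarKernel k' x y + 8 * k * haarKernel k x y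
      + 4 * gOne k k' f x ^ 2 + 4 * gOne k k' f y ^ 2 + 4 * ccC k k' f ^ 2 := by
  rw [degKernel_eq, gTwo_eq_gOne]
  have h1 := haarKernel_sq_le k' hk' x y
  have h2 := haarKernel_sq_le k hk x y
  set A := haarKernel k' x y
  set B := haarKernel k x y
  set u := gOne k k' f x
  set v := gOne k k' f y
  set w := ccC k k' f
  have s1 : (A - B - u - v + w) ^ 2 ≤ 4 * (A - B) ^ 2 + 4 * u ^ 2 + 4 * v ^ 2 + 4 * w ^ 2 := by
    nlinarith [sq_nonneg (A - B + u), sq_nonneg (A - B + v), sq_nonneg (A - B - w),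
      sq_nonneg (u - v), sq_nonneg (u + w), sq_nonneg (v + w)]
  have s2 : 4 * (A - B) ^ 2 ≤ 8 * (k':ℝ) * A + 8 * (k:ℝ) * B := by
    nlinarith [h1, h2, sq_nonneg (A + B)]
  linarith

lemma D_nonneg (hd : IsDensity f) (x : ℝ) :
    0 ≤ ∫ y in Set.Icc (0:ℝ) 1, degKernel k k' f x y ^ 2 * f y :=
  setIntegral_nonneg measurableSet_Icc fun y hy =>
    mul_nonneg (sq_nonneg _) (hd.2.1 y hy)

lemma D_le (hd : IsDensity f) (hfF : ∀ x ∈ Set.Icc (0:ℝ) 1, f x ≤ F) (hF0 : 0 ≤ F)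
    (hk : 0 < k) (hk' : 0 < k') (x : ℝ) :
    ∫ y in Set.Icc (0:ℝ) 1, degKernel k k' f x y ^ 2 * f y
      ≤ (8 * F + 6 * F ^ 2) * ((k':ℝ) + k) := by
  have hi1 : Integrable (fun y => (8 * (k':ℝ)) * (haarKernel k' x y * f y)) μ01 :=
    (integrable_haarKernel_f hd k' x).const_mul _
  have hi2 : Integrable (fun y => (8 * (k:ℝ)) * (haarKernel k x y * f y)) μ01 :=
    (integrable_haarKernel_f hd k x).const_mul _
  have hi3 : Integrable (fun y => (4 * gOne k k' f x ^ 2 + 4 * ccC k k' f ^ 2) * f y) μ01 :=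
    (integrable_f hd).const_mul _
  have hg1b : ∀ y, |4 * gOne k k' f y ^ 2| ≤ 4 * F ^ 2 := by
    intro y
    have h := abs_gOne_le hd hfF hF0 hk hk' y
    rw [abs_of_nonneg (by positivity)]
    nlinarith [abs_nonneg (gOne k k' f y), sq_abs (gOne k k' f y)]
  have hi4 : Integrable (fun y => (4 * gOne k k' f y ^ 2) * f y) μ01 :=
    int_bdd_mul hd (((measurable_gOne hd).pow_const 2).const_mul 4) hg1b
  have hRHS : Integrable (fun y => (8 * (k':ℝ)) * (haarKernel k' x y * f y)
      + (8 * (k:ℝ)) * (haarKernel k x y * f y)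
      + (4 * gOne k k' f x ^ 2 + 4 * ccC k k' f ^ 2) * f y
      + (4 * gOne k k' f y ^ 2) * f y) μ01 := ((hi1.add hi2).add hi3).add hi4
  have hmono : ∫ y in Set.Icc (0:ℝ) 1, degKernel k k' f x y ^ 2 * f y
      ≤ ∫ y in Set.Icc (0:ℝ) 1, ((8 * (k':ℝ)) * (haarKernel k' x y * f y)
        + (8 * (k:ℝ)) * (haarKernel k x y * f y)
        + (4 * gOne k k' f x ^ 2 + 4 * ccC k k' f ^ 2) * f y
        + (4 * gOne k k' f y ^ 2) * f y) := by
    apply integral_mono_of_nonneg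
    · exact (f_ae_nonneg hd).mono fun y hy => mul_nonneg (sq_nonneg _) hy
    · exact hRHS
    · refine (f_ae_nonneg hd).mono fun y hy => ?_
      have hp := degKernel_sq_pointwise hd hfF hF0 hk hk' x y
      show degKernel k k' f x y ^ 2 * f y ≤ _
      calc degKernel k k' f x y ^ 2 * f y
          ≤ (8 * (k':ℝ) * haarKernel k' x y + 8 * (k:ℝ) * haarKernel k x y
            + 4 * gOne k k' f x ^ 2 + 4 * gOne k k' f y ^ 2 + 4 * ccC k k' f ^ 2) * f y :=
            mul_le_mul_of_nonneg_right hp hy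
        _ = 8 * (k':ℝ) * (haarKernel k' x y * f y) + 8 * (k:ℝ) * (haarKernel k x y * f y)
            + (4 * gOne k k' f x ^ 2 + 4 * ccC k k' f ^ 2) * f y
            + 4 * gOne k k' f y ^ 2 * f y := by ring
  refine le_trans hmono ?_
  have hi12 : Integrable (fun y => (8 * (k':ℝ)) * (haarKernel k' x y * f y)
      + (8 * (k:ℝ)) * (haarKernel k x y * f y)) μ01 := hi1.add hi2
  have hi123 : Integrable (fun y => (8 * (k':ℝ)) * (haarKernel k' x y * f y)
      + (8 * (k:ℝ)) * (haarKernel k x y * f y)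
      + (4 * gOne k k' f x ^ 2 + 4 * ccC k k' f ^ 2) * f y) μ01 := hi12.add hi3
  rw [integral_add hi123 hi4, integral_add hi12 hi3,
    integral_add hi1 hi2, integral_const_mul, integral_const_mul, integral_const_mul]
  have b1 : (8 * (k':ℝ)) * ∫ y in Set.Icc (0:ℝ) 1, haarKernel k' x y * f y
      ≤ 8 * (k':ℝ) * F := by
    apply mul_le_mul_of_nonneg_left (integral_haarKernel_f_le hd hfF hF0 k' hk' x)
    positivity
  have b2 : (8 * (k:ℝ)) * ∫ y in Set.Icc (0:ℝ) 1, haarKernel k x y * f y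
      ≤ 8 * (k:ℝ) * F := by
    apply mul_le_mul_of_nonneg_left (integral_haarKernel_f_le hd hfF hF0 k hk x)
    positivity
  have b3 : (4 * gOne k k' f x ^ 2 + 4 * ccC k k' f ^ 2) * ∫ y in Set.Icc (0:ℝ) 1, f y
      ≤ 8 * F ^ 2 := by
    rw [hd.2.2, mul_one]
    have h1 := abs_gOne_le hd hfF hF0 hk hk' x
    have h2 := abs_ccC_le hd hfF hF0 hk hk'
    nlinarith [sq_abs (gOne k k' f x), sq_abs (ccC k k' f), abs_nonneg (gOne k k' f x),
      abs_nonneg (ccC k k' f)]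
  have b4 : ∫ y in Set.Icc (0:ℝ) 1, (4 * gOne k k' f y ^ 2) * f y ≤ 4 * F ^ 2 := by
    calc ∫ y in Set.Icc (0:ℝ) 1, (4 * gOne k k' f y ^ 2) * f y
        ≤ ∫ y in Set.Icc (0:ℝ) 1, (4 * F ^ 2) * f y := by
          apply integral_mono_of_nonneg
          · exact (f_ae_nonneg hd).mono fun y hy => mul_nonneg (by positivity) hy
          · exact (integrable_f hd).const_mul _
          · refine (f_ae_nonneg hd).mono fun y hy => ?_
            have := hg1b y
            rw [abs_of_nonneg (by positivity)] at this
            exact mul_le_mul_of_nonneg_right this hy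
      _ = 4 * F ^ 2 := by rw [integral_const_mul, hd.2.2, mul_one]
  have hkk2 : (2:ℝ) ≤ (k':ℝ) + k := by
    have h1 : (1:ℝ) ≤ (k':ℝ) := by exact_mod_cast hk'
    have h2 : (1:ℝ) ≤ (k:ℝ) := by exact_mod_cast hk
    linarith
  nlinarith [b1, b2, b3, b4, hF0, hkk2, sq_nonneg F]

end HaarAux3

namespace HaarAux4
open HaarAux HaarAux2 HaarAux3

local notation "μ01" => (volume.restrict (Set.Icc (0:ℝ) 1))

variable {f : ℝ → ℝ} {F : ℝ}

lemma integrable_mul_mul (hd : IsDensity f) {u v : ℝ → ℝ}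
    (hum : Measurable u) (hvm : Measurable v)
    (hu : Integrable (fun x => u x ^ 2 * f x) μ01)
    (hv : Integrable (fun x => v x ^ 2 * f x) μ01) :
    Integrable (fun x => u x * v x * f x) μ01 := by
  refine Integrable.mono' ((hu.add hv).const_mul (1/2 : ℝ))
    ((hum.mul hvm).mul hd.1).aestronglyMeasurable ?_
  refine (f_ae_nonneg hd).mono fun x hx => ?_
  have h1 : |u x * v x| ≤ (u x ^ 2 + v x ^ 2) / 2 := by
    rw [abs_mul]
    nlinarith [sq_nonneg (|u x| - |v x|), sq_abs (u x), sq_abs (v x)]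
  rw [Real.norm_eq_abs, abs_mul, abs_of_nonneg hx]
  calc |u x * v x| * f x ≤ (u x ^ 2 + v x ^ 2) / 2 * f x :=
        mul_le_mul_of_nonneg_right h1 hx
    _ = 1/2 * (u x ^ 2 * f x + v x ^ 2 * f x) := by ring

lemma weighted_CS (hd : IsDensity f) {u v : ℝ → ℝ}
    (hum : Measurable u) (hvm : Measurable v)
    (hu : Integrable (fun x => u x ^ 2 * f x) μ01)
    (hv : Integrable (fun x => v x ^ 2 * f x) μ01) :
    |∫ x in Set.Icc (0:ℝ) 1, u x * v x * f x|
      ≤ Real.sqrt (∫ x in Set.Icc (0:ℝ) 1, u x ^ 2 * f x)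
        * Real.sqrt (∫ x in Set.Icc (0:ℝ) 1, v x ^ 2 * f x) := by
  set A := ∫ x in Set.Icc (0:ℝ) 1, u x ^ 2 * f x with hAdef
  set B := ∫ x in Set.Icc (0:ℝ) 1, v x ^ 2 * f x with hBdef
  have hA0 : 0 ≤ A := integral_nonneg_of_ae
    ((f_ae_nonneg hd).mono fun x hx => mul_nonneg (sq_nonneg _) hx)
  have hB0 : 0 ≤ B := integral_nonneg_of_ae
    ((f_ae_nonneg hd).mono fun x hx => mul_nonneg (sq_nonneg _) hx)
  have hint : Integrable (fun x => u x * v x * f x) μ01 :=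
    integrable_mul_mul hd hum hvm hu hv
  set I := ∫ x in Set.Icc (0:ℝ) 1, u x * v x * f x with hIdef
  have key : I ^ 2 ≤ A * B := by
    by_cases hA : A = 0
    · have hae : (fun x => u x ^ 2 * f x) =ᵐ[μ01] 0 :=
        (integral_eq_zero_iff_of_nonneg_ae
          ((f_ae_nonneg hd).mono fun x hx => mul_nonneg (sq_nonneg _) hx) hu).mp hA
      have hz : (fun x => u x * v x * f x) =ᵐ[μ01] 0 := by
        refine hae.mono fun x hx => ?_
        have h0 : u x ^ 2 * f x = 0 := hx
        rcases mul_eq_zero.mp h0 with h | h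
        · have : u x = 0 := by
            have := pow_eq_zero_iff (n := 2) (by norm_num) |>.mp h
            exact this
          simp [this]
        · simp [h]
      have : I = 0 := by
        rw [hIdef]
        exact integral_eq_zero_of_ae hz
      rw [this]
      simpa using mul_nonneg hA0 hB0
    · have hApos : 0 < A := lt_of_le_of_ne hA0 (Ne.symm hA)
      set t := I / A with htdef
      have hnn : 0 ≤ ∫ x in Set.Icc (0:ℝ) 1, (t * u x - v x) ^ 2 * f x :=
        integral_nonneg_of_ae ((f_ae_nonneg hd).mono fun x hx =>
          mul_nonneg (sq_nonneg _) hx)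
      have hexp : ∫ x in Set.Icc (0:ℝ) 1, (t * u x - v x) ^ 2 * f x
          = t ^ 2 * A - 2 * t * I + B := by
        have hrw : (fun x => (t * u x - v x) ^ 2 * f x)
            = fun x => (t ^ 2 * (u x ^ 2 * f x) - (2 * t) * (u x * v x * f x))
                + v x ^ 2 * f x := funext fun x => by ring
        have hc1 : Integrable (fun x => t ^ 2 * (u x ^ 2 * f x)) μ01 := hu.const_mul _
        have hc2 : Integrable (fun x => (2 * t) * (u x * v x * f x)) μ01 := hint.const_mul _
        have hsub : Integrable
            (fun x => t ^ 2 * (u x ^ 2 * f x) - (2 * t) * (u x * v x * f x)) μ01 :=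
          hc1.sub hc2
        rw [hrw, integral_add hsub hv, integral_sub hc1 hc2,
          integral_const_mul, integral_const_mul]
      rw [hexp] at hnn
      have he : t ^ 2 * A - 2 * t * I + B = B - I ^ 2 / A := by
        rw [htdef]
        field_simp
        ring
      rw [he] at hnn
      have h2 : I ^ 2 / A ≤ B := by linarith
      calc I ^ 2 = I ^ 2 / A * A := by field_simp
        _ ≤ B * A := mul_le_mul_of_nonneg_right h2 (le_of_lt hApos)
        _ = A * B := mul_comm _ _
  calc |I| = Real.sqrt (I ^ 2) := (Real.sqrt_sq_eq_abs _).symm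
    _ ≤ Real.sqrt (A * B) := Real.sqrt_le_sqrt key
    _ = Real.sqrt A * Real.sqrt B := Real.sqrt_mul hA0 B

lemma sq_sum_le_card_mul (n : ℕ) (g : ℕ → ℝ) :
    (∑ i ∈ Finset.range n, g i) ^ 2 ≤ (n : ℝ) * ∑ i ∈ Finset.range n, g i ^ 2 := by
  have h := Finset.sum_mul_sq_le_sq_mul_sq (Finset.range n) (fun _ => (1:ℝ)) g
  simpa using h

lemma sum_sqrt_le (n : ℕ) (α : ℕ → ℝ) (h0 : ∀ i, 0 ≤ α i) :
    ∑ i ∈ Finset.range n, Real.sqrt (α i)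
      ≤ Real.sqrt n * Real.sqrt (∑ i ∈ Finset.range n, α i) := by
  have hs : 0 ≤ ∑ i ∈ Finset.range n, Real.sqrt (α i) :=
    Finset.sum_nonneg fun i _ => Real.sqrt_nonneg _
  have h := sq_sum_le_card_mul n (fun i => Real.sqrt (α i))
  have h2 : (∑ i ∈ Finset.range n, Real.sqrt (α i)) ^ 2
      ≤ (n : ℝ) * ∑ i ∈ Finset.range n, α i := by
    have he : ∑ i ∈ Finset.range n, Real.sqrt (α i) ^ 2 = ∑ i ∈ Finset.range n, α i :=
      Finset.sum_congr rfl fun i _ => Real.sq_sqrt (h0 i)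
    rw [he] at h
    exact h
  calc ∑ i ∈ Finset.range n, Real.sqrt (α i)
      = Real.sqrt ((∑ i ∈ Finset.range n, Real.sqrt (α i)) ^ 2) :=
        (Real.sqrt_sq hs).symm
    _ ≤ Real.sqrt ((n : ℝ) * ∑ i ∈ Finset.range n, α i) := Real.sqrt_le_sqrt h2
    _ = Real.sqrt n * Real.sqrt (∑ i ∈ Finset.range n, α i) :=
        Real.sqrt_mul (Nat.cast_nonneg n) _

end HaarAux4

namespace HaarAux5
open HaarAux HaarAux2 HaarAux3 HaarAux4

local notation "μ01" => (volume.restrict (Set.Icc (0:ℝ) 1))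

def Tker (k k' : ℕ) (f c : ℝ → ℝ) (x : ℝ) : ℝ :=
  ∫ y in Set.Icc (0:ℝ) 1, degKernel k k' f x y * c y * f y

variable {f : ℝ → ℝ} {F : ℝ} {k k' : ℕ} {c : ℝ → ℝ}

section Proj

variable (hd : IsDensity f) (hfF : ∀ x ∈ Set.Icc (0:ℝ) 1, f x ≤ F) (hF0 : 0 ≤ F)
  (hk : 0 < k) (hcm : Measurable c)
  (hc2 : Integrable (fun y => c y ^ 2 * f y) μ01)

include hd hcm hc2 in
lemma integrable_cf : Integrable (fun y => c y * f y) μ01 := by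
  have h1 : Integrable (fun y => (1:ℝ) ^ 2 * f y) μ01 := by
    simpa using integrable_f hd
  have := integrable_mul_mul hd hcm (measurable_const (a := (1:ℝ))) hc2 h1
  simpa using this

include hd hcm hc2 in
lemma integrable_ind_cf (j : ℕ) :
    Integrable (fun y => haarInd k j y * (c y * f y)) μ01 :=
  (integrable_cf hd hcm hc2).bdd_mul (measurable_haarInd k j).aestronglyMeasurable
    (ae_of_all _ fun y => by
      rw [Real.norm_eq_abs, abs_of_nonneg (haarInd_nonneg k j y)]
      exact haarInd_le_one k j y)

include hd hcm hc2 in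
lemma integrable_ind_c2f (j : ℕ) :
    Integrable (fun y => haarInd k j y * (c y ^ 2 * f y)) μ01 :=
  hc2.bdd_mul (measurable_haarInd k j).aestronglyMeasurable
    (ae_of_all _ fun y => by
      rw [Real.norm_eq_abs, abs_of_nonneg (haarInd_nonneg k j y)]
      exact haarInd_le_one k j y)

include hd hfF hF0 hk hcm hc2 in
lemma gamma_sq_le (j : ℕ) :
    (∫ y in Set.Icc (0:ℝ) 1, haarInd k j y * (c y * f y)) ^ 2
      ≤ (F / k) * ∫ y in Set.Icc (0:ℝ) 1, haarInd k j y * (c y ^ 2 * f y) := by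
  have hu2 : Integrable (fun y => haarInd k j y ^ 2 * f y) μ01 :=
    int_bdd_mul hd ((measurable_haarInd k j).pow_const 2) (M := 1) (fun y => by
      rw [abs_of_nonneg (sq_nonneg _), sq]
      rw [haarInd_mul_self]
      exact haarInd_le_one k j y)
  have hv2 : Integrable (fun y => (haarInd k j y * c y) ^ 2 * f y) μ01 := by
    refine Integrable.mono' hc2 ?_ ?_
    · exact (((measurable_haarInd k j).mul hcm).pow_const 2).mul hd.1 |>.aestronglyMeasurable
    · refine (f_ae_nonneg hd).mono fun y hy => ?_
      rw [Real.norm_eq_abs, abs_of_nonneg (mul_nonneg (sq_nonneg _) hy)]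
      have h1 : (haarInd k j y * c y) ^ 2 ≤ c y ^ 2 := by
        have ha := haarInd_le_one k j y
        have hb := haarInd_nonneg k j y
        have hi2 : haarInd k j y ^ 2 ≤ 1 := by nlinarith
        rw [mul_pow]
        nlinarith [hi2, sq_nonneg (c y)]
      exact mul_le_mul_of_nonneg_right h1 hy
  have hcs := weighted_CS hd (v := fun y => haarInd k j y * c y) (measurable_haarInd k j) ((measurable_haarInd k j).mul hcm)
    hu2 hv2
  have e1 : (fun y => haarInd k j y * (haarInd k j y * c y) * f y)
      = fun y => haarInd k j y * (c y * f y) := by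
    funext y
    rw [← mul_assoc, haarInd_mul_self]
    ring
  have e2 : (fun y => haarInd k j y ^ 2 * f y) = fun y => haarInd k j y * f y := by
    funext y
    rw [sq, haarInd_mul_self]
  have e3 : (fun y => (haarInd k j y * c y) ^ 2 * f y)
      = fun y => haarInd k j y * (c y ^ 2 * f y) := by
    funext y
    rw [mul_pow, sq, haarInd_mul_self]
    ring
  rw [e1, e2, e3] at hcs
  have hindf : ∫ y in Set.Icc (0:ℝ) 1, haarInd k j y * f y ≤ F / k :=
    integral_haarInd_f_le hd hfF hF0 k j hk
  have hindf0 : 0 ≤ ∫ y in Set.Icc (0:ℝ) 1, haarInd k j y * f y :=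
    integral_haarInd_f_nonneg hd k j
  have hd0 : 0 ≤ ∫ y in Set.Icc (0:ℝ) 1, haarInd k j y * (c y ^ 2 * f y) :=
    setIntegral_nonneg measurableSet_Icc fun y hy =>
      mul_nonneg (haarInd_nonneg k j y) (mul_nonneg (sq_nonneg _) (hd.2.1 y hy))
  calc (∫ y in Set.Icc (0:ℝ) 1, haarInd k j y * (c y * f y)) ^ 2
      = |∫ y in Set.Icc (0:ℝ) 1, haarInd k j y * (c y * f y)| ^ 2 := (sq_abs _).symm
    _ ≤ (Real.sqrt (∫ y in Set.Icc (0:ℝ) 1, haarInd k j y * f y)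
          * Real.sqrt (∫ y in Set.Icc (0:ℝ) 1, haarInd k j y * (c y ^ 2 * f y))) ^ 2 := by
        apply pow_le_pow_left₀ (abs_nonneg _) hcs
    _ = (∫ y in Set.Icc (0:ℝ) 1, haarInd k j y * f y)
          * ∫ y in Set.Icc (0:ℝ) 1, haarInd k j y * (c y ^ 2 * f y) := by
        rw [mul_pow, Real.sq_sqrt hindf0, Real.sq_sqrt hd0]
    _ ≤ (F / k) * ∫ y in Set.Icc (0:ℝ) 1, haarInd k j y * (c y ^ 2 * f y) :=
        mul_le_mul_of_nonneg_right hindf hd0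

include hd hfF hF0 hk hcm hc2 in
lemma TK_bound :
    Measurable (fun x => ∫ y in Set.Icc (0:ℝ) 1, haarKernel k x y * (c y * f y))
    ∧ (∃ M, ∀ x, |∫ y in Set.Icc (0:ℝ) 1, haarKernel k x y * (c y * f y)| ≤ M)
    ∧ Integrable (fun x =>
        (∫ y in Set.Icc (0:ℝ) 1, haarKernel k x y * (c y * f y)) ^ 2 * f x) μ01
    ∧ ∫ x in Set.Icc (0:ℝ) 1,
        (∫ y in Set.Icc (0:ℝ) 1, haarKernel k x y * (c y * f y)) ^ 2 * f x
      ≤ F ^ 2 * ∫ y in Set.Icc (0:ℝ) 1, c y ^ 2 * f y := by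
  set γ : ℕ → ℝ := fun j => ∫ y in Set.Icc (0:ℝ) 1, haarInd k j y * (c y * f y) with hγ
  set δ : ℕ → ℝ := fun j => ∫ y in Set.Icc (0:ℝ) 1, haarInd k j y * (c y ^ 2 * f y) with hδ
  have hrepr : ∀ x, (∫ y in Set.Icc (0:ℝ) 1, haarKernel k x y * (c y * f y))
      = ∑ j ∈ Finset.range k, ((k:ℝ) * haarInd k j x) * γ j := fun x =>
    integral_haarKernel_mul hd k x (fun y => c y * f y)
      (fun j => integrable_ind_cf hd hcm hc2 j)
  have hmeas : Measurable (fun x => ∫ y in Set.Icc (0:ℝ) 1, haarKernel k x y * (c y * f y)) := by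
    simp only [hrepr]
    exact Finset.measurable_sum _ fun j _ =>
      ((measurable_haarInd k j).const_mul _).mul_const _
  have hbdd : ∀ x, |∫ y in Set.Icc (0:ℝ) 1, haarKernel k x y * (c y * f y)|
      ≤ ∑ j ∈ Finset.range k, (k:ℝ) * |γ j| := by
    intro x
    rw [hrepr x]
    refine le_trans (Finset.abs_sum_le_sum_abs _ _) (Finset.sum_le_sum fun j _ => ?_)
    rw [abs_mul, abs_mul, abs_of_nonneg (Nat.cast_nonneg (α := ℝ) k),
      abs_of_nonneg (haarInd_nonneg k j x)]
    have h1 := haarInd_le_one k j x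
    have h2 := haarInd_nonneg k j x
    nlinarith [mul_nonneg (Nat.cast_nonneg (α := ℝ) k) (abs_nonneg (γ j)), h1, h2,
      abs_nonneg (γ j), Nat.cast_nonneg (α := ℝ) k]
  -- pointwise square bound
  have hsq : ∀ x, (∫ y in Set.Icc (0:ℝ) 1, haarKernel k x y * (c y * f y)) ^ 2
      ≤ (k:ℝ) ^ 2 * ∑ j ∈ Finset.range k, haarInd k j x * γ j ^ 2 := by
    intro x
    rw [hrepr x]
    have e0 : ∑ j ∈ Finset.range k, ((k:ℝ) * haarInd k j x) * γ j
        = (k:ℝ) * ∑ j ∈ Finset.range k, haarInd k j x * γ j := by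
      rw [Finset.mul_sum]
      exact Finset.sum_congr rfl fun j _ => by ring
    rw [e0, mul_pow]
    have h := Finset.sum_mul_sq_le_sq_mul_sq (Finset.range k)
      (fun j => haarInd k j x) (fun j => haarInd k j x * γ j)
    have e1 : ∑ j ∈ Finset.range k, haarInd k j x * (haarInd k j x * γ j)
        = ∑ j ∈ Finset.range k, haarInd k j x * γ j :=
      Finset.sum_congr rfl fun j _ => by rw [← mul_assoc, haarInd_mul_self]
    have e2 : ∑ j ∈ Finset.range k, haarInd k j x ^ 2
        = ∑ j ∈ Finset.range k, haarInd k j x :=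
      Finset.sum_congr rfl fun j _ => by rw [sq, haarInd_mul_self]
    have e3 : ∑ j ∈ Finset.range k, (haarInd k j x * γ j) ^ 2
        = ∑ j ∈ Finset.range k, haarInd k j x * γ j ^ 2 :=
      Finset.sum_congr rfl fun j _ => by rw [mul_pow, sq, haarInd_mul_self]
    rw [e1, e2, e3] at h
    have hs1 : ∑ j ∈ Finset.range k, haarInd k j x ≤ 1 := sum_haarInd_le_one k hk x
    have hs2 : 0 ≤ ∑ j ∈ Finset.range k, haarInd k j x * γ j ^ 2 :=
      Finset.sum_nonneg fun j _ => mul_nonneg (haarInd_nonneg k j x) (sq_nonneg _)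
    have : (∑ j ∈ Finset.range k, haarInd k j x * γ j) ^ 2
        ≤ ∑ j ∈ Finset.range k, haarInd k j x * γ j ^ 2 := by
      refine le_trans h ?_
      nlinarith
    exact mul_le_mul_of_nonneg_left this (sq_nonneg _)
  -- integrability of the square
  have hint_sq : Integrable (fun x =>
      (∫ y in Set.Icc (0:ℝ) 1, haarKernel k x y * (c y * f y)) ^ 2 * f x) μ01 := by
    refine int_bdd_mul hd (hmeas.pow_const 2)
      (M := (∑ j ∈ Finset.range k, (k:ℝ) * |γ j|) ^ 2) (fun x => ?_)
    rw [abs_of_nonneg (sq_nonneg _)]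
    have h := hbdd x
    calc (∫ y in Set.Icc (0:ℝ) 1, haarKernel k x y * (c y * f y)) ^ 2
        = |∫ y in Set.Icc (0:ℝ) 1, haarKernel k x y * (c y * f y)| ^ 2 := (sq_abs _).symm
      _ ≤ (∑ j ∈ Finset.range k, (k:ℝ) * |γ j|) ^ 2 := pow_le_pow_left₀ (abs_nonneg _) h 2
  refine ⟨hmeas, ⟨_, hbdd⟩, hint_sq, ?_⟩
  -- now the integral bound
  have hindf_int : ∀ j, Integrable (fun x => haarInd k j x * f x) μ01 :=
    fun j => integrable_haarInd_f hd k j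
  have hRHS_int : Integrable (fun x =>
      ∑ j ∈ Finset.range k, ((k:ℝ) ^ 2 * γ j ^ 2) * (haarInd k j x * f x)) μ01 :=
    integrable_finset_sum _ fun j _ => (hindf_int j).const_mul _
  have hmono : ∫ x in Set.Icc (0:ℝ) 1,
      (∫ y in Set.Icc (0:ℝ) 1, haarKernel k x y * (c y * f y)) ^ 2 * f x
      ≤ ∫ x in Set.Icc (0:ℝ) 1,
          ∑ j ∈ Finset.range k, ((k:ℝ) ^ 2 * γ j ^ 2) * (haarInd k j x * f x) := by
    apply integral_mono_of_nonneg
    · exact (f_ae_nonneg hd).mono fun x hx => mul_nonneg (sq_nonneg _) hx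
    · exact hRHS_int
    · refine (f_ae_nonneg hd).mono fun x hx => ?_
      show (∫ y in Set.Icc (0:ℝ) 1, haarKernel k x y * (c y * f y)) ^ 2 * f x ≤ _
      calc (∫ y in Set.Icc (0:ℝ) 1, haarKernel k x y * (c y * f y)) ^ 2 * f x
          ≤ ((k:ℝ) ^ 2 * ∑ j ∈ Finset.range k, haarInd k j x * γ j ^ 2) * f x :=
            mul_le_mul_of_nonneg_right (hsq x) hx
        _ = ∑ j ∈ Finset.range k, ((k:ℝ) ^ 2 * γ j ^ 2) * (haarInd k j x * f x) := by
            rw [Finset.mul_sum, Finset.sum_mul]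
            exact Finset.sum_congr rfl fun j _ => by ring
  have hΓ0 : 0 ≤ ∫ y in Set.Icc (0:ℝ) 1, c y ^ 2 * f y :=
    setIntegral_nonneg measurableSet_Icc fun y hy => mul_nonneg (sq_nonneg _) (hd.2.1 y hy)
  have hδΓ : ∑ j ∈ Finset.range k, δ j ≤ ∫ y in Set.Icc (0:ℝ) 1, c y ^ 2 * f y := by
    have e : ∑ j ∈ Finset.range k, δ j = ∫ y in Set.Icc (0:ℝ) 1,
        ∑ j ∈ Finset.range k, haarInd k j y * (c y ^ 2 * f y) :=
      (integral_finset_sum _ fun j _ => integrable_ind_c2f hd hcm hc2 j).symm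
    rw [e]
    apply integral_mono_of_nonneg
    · exact (f_ae_nonneg hd).mono fun y hy => Finset.sum_nonneg fun j _ =>
        mul_nonneg (haarInd_nonneg k j y) (mul_nonneg (sq_nonneg _) hy)
    · exact hc2
    · refine (f_ae_nonneg hd).mono fun y hy => ?_
      show ∑ j ∈ Finset.range k, haarInd k j y * (c y ^ 2 * f y) ≤ c y ^ 2 * f y
      have e2 : ∑ j ∈ Finset.range k, haarInd k j y * (c y ^ 2 * f y)
          = (∑ j ∈ Finset.range k, haarInd k j y) * (c y ^ 2 * f y) := by
        rw [Finset.sum_mul]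
      rw [e2]
      have := sum_haarInd_le_one k hk y
      nlinarith [mul_nonneg (sq_nonneg (c y)) hy,
        Finset.sum_nonneg (fun j _ => haarInd_nonneg k j y) (s := Finset.range k)]
  refine le_trans hmono ?_
  rw [integral_finset_sum _ fun j _ => (hindf_int j).const_mul _]
  simp_rw [integral_const_mul]
  have hterm : ∀ j ∈ Finset.range k,
      ((k:ℝ) ^ 2 * γ j ^ 2) * ∫ x in Set.Icc (0:ℝ) 1, haarInd k j x * f x
        ≤ F ^ 2 * δ j := by
    intro j _
    have h1 : γ j ^ 2 ≤ (F / k) * δ j := gamma_sq_le hd hfF hF0 hk hcm hc2 j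
    have h2 : 0 ≤ ∫ x in Set.Icc (0:ℝ) 1, haarInd k j x * f x :=
      integral_haarInd_f_nonneg hd k j
    have h3 : ∫ x in Set.Icc (0:ℝ) 1, haarInd k j x * f x ≤ F / k :=
      integral_haarInd_f_le hd hfF hF0 k j hk
    have hδ0 : 0 ≤ δ j :=
      setIntegral_nonneg measurableSet_Icc fun y hy =>
        mul_nonneg (haarInd_nonneg k j y) (mul_nonneg (sq_nonneg _) (hd.2.1 y hy))
    have hFk : 0 ≤ F / k := by positivity
    have h4 : γ j ^ 2 * ∫ x in Set.Icc (0:ℝ) 1, haarInd k j x * f x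
        ≤ ((F / k) * δ j) * (F / k) :=
      mul_le_mul h1 h3 h2 (by positivity)
    have hkr : (0:ℝ) < k := by exact_mod_cast hk
    have e5 : (k:ℝ) ^ 2 * (((F / k) * δ j) * (F / k)) = F ^ 2 * δ j := by
      field_simp
    calc ((k:ℝ) ^ 2 * γ j ^ 2) * ∫ x in Set.Icc (0:ℝ) 1, haarInd k j x * f x
        = (k:ℝ) ^ 2 * (γ j ^ 2 * ∫ x in Set.Icc (0:ℝ) 1, haarInd k j x * f x) := by ring
      _ ≤ (k:ℝ) ^ 2 * (((F / k) * δ j) * (F / k)) :=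
          mul_le_mul_of_nonneg_left h4 (sq_nonneg _)
      _ = F ^ 2 * δ j := e5
  calc ∑ j ∈ Finset.range k, ((k:ℝ) ^ 2 * γ j ^ 2) * ∫ x in Set.Icc (0:ℝ) 1, haarInd k j x * f x
      ≤ ∑ j ∈ Finset.range k, F ^ 2 * δ j := Finset.sum_le_sum hterm
    _ = F ^ 2 * ∑ j ∈ Finset.range k, δ j := by rw [Finset.mul_sum]
    _ ≤ F ^ 2 * ∫ y in Set.Icc (0:ℝ) 1, c y ^ 2 * f y :=
        mul_le_mul_of_nonneg_left hδΓ (sq_nonneg F)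

end Proj

end HaarAux5

namespace HaarAux6
open HaarAux HaarAux2 HaarAux3 HaarAux4 HaarAux5

local notation "μ01" => (volume.restrict (Set.Icc (0:ℝ) 1))

variable {f : ℝ → ℝ} {F : ℝ} {k k' : ℕ} {c : ℝ → ℝ}

lemma five_sq (a b u w v : ℝ) :
    (a - b - u - w + v) ^ 2 ≤ 5 * (a ^ 2 + b ^ 2 + u ^ 2 + w ^ 2 + v ^ 2) := by
  nlinarith [sq_nonneg (a + b), sq_nonneg (a + u), sq_nonneg (a + w), sq_nonneg (a - v),
    sq_nonneg (b - u), sq_nonneg (b - w), sq_nonneg (b + v), sq_nonneg (u - w),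
    sq_nonneg (u + v), sq_nonneg (w + v)]

section TT

variable (hd : IsDensity f) (hfF : ∀ x ∈ Set.Icc (0:ℝ) 1, f x ≤ F) (hF0 : 0 ≤ F)
  (hk : 0 < k) (hk' : 0 < k') (hcm : Measurable c)
  (hc2 : Integrable (fun y => c y ^ 2 * f y) μ01)

include hd hfF hF0 hk hk' hcm hc2

lemma Tker_repr (x : ℝ) :
    Tker k k' f c x
      = (∫ y in Set.Icc (0:ℝ) 1, haarKernel k' x y * (c y * f y))
        - (∫ y in Set.Icc (0:ℝ) 1, haarKernel k x y * (c y * f y))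
        - gOne k k' f x * (∫ y in Set.Icc (0:ℝ) 1, c y * f y)
        - (∫ y in Set.Icc (0:ℝ) 1, gOne k k' f y * (c y * f y))
        + ccC k k' f * ∫ y in Set.Icc (0:ℝ) 1, c y * f y := by
  have hcf : Integrable (fun y => c y * f y) μ01 := integrable_cf hd hcm hc2
  have i1 : Integrable (fun y => haarKernel k' x y * (c y * f y)) μ01 :=
    hcf.bdd_mul (measurable_haarKernel_right k' x).aestronglyMeasurable
      (ae_of_all _ fun y => by rw [Real.norm_eq_abs]; exact abs_haarKernel_le k' x y)
  have i2 : Integrable (fun y => haarKernel k x y * (c y * f y)) μ01 :=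
    hcf.bdd_mul (measurable_haarKernel_right k x).aestronglyMeasurable
      (ae_of_all _ fun y => by rw [Real.norm_eq_abs]; exact abs_haarKernel_le k x y)
  have i3 : Integrable (fun y => gOne k k' f x * (c y * f y)) μ01 := hcf.const_mul _
  have i4 : Integrable (fun y => gOne k k' f y * (c y * f y)) μ01 :=
    hcf.bdd_mul (measurable_gOne hd).aestronglyMeasurable
      (ae_of_all _ fun y => by rw [Real.norm_eq_abs]; exact abs_gOne_le hd hfF hF0 hk hk' y)
  have i5 : Integrable (fun y => ccC k k' f * (c y * f y)) μ01 := hcf.const_mul _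
  have i12 : Integrable (fun y => haarKernel k' x y * (c y * f y)
      - haarKernel k x y * (c y * f y)) μ01 := i1.sub i2
  have i123 : Integrable (fun y => haarKernel k' x y * (c y * f y)
      - haarKernel k x y * (c y * f y) - gOne k k' f x * (c y * f y)) μ01 := i12.sub i3
  have i1234 : Integrable (fun y => haarKernel k' x y * (c y * f y)
      - haarKernel k x y * (c y * f y) - gOne k k' f x * (c y * f y)
      - gOne k k' f y * (c y * f y)) μ01 := i123.sub i4
  have h : (fun y => degKernel k k' f x y * c y * f y)
      = fun y => (haarKernel k' x y * (c y * f y) - haarKernel k x y * (c y * f y)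
          - gOne k k' f x * (c y * f y) - gOne k k' f y * (c y * f y))
        + ccC k k' f * (c y * f y) := by
    funext y
    rw [degKernel_eq, gTwo_eq_gOne]
    ring
  show (∫ y in Set.Icc (0:ℝ) 1, degKernel k k' f x y * c y * f y) = _
  rw [h, integral_add i1234 i5, integral_sub i123 i4, integral_sub i12 i3,
    integral_sub i1 i2, integral_const_mul, integral_const_mul]

lemma measurable_Tker : Measurable (Tker k k' f c) := by
  have h1 := (TK_bound hd hfF hF0 hk' hcm hc2).1
  have h2 := (TK_bound hd hfF hF0 hk hcm hc2).1
  have : Tker k k' f c = fun x =>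
      (∫ y in Set.Icc (0:ℝ) 1, haarKernel k' x y * (c y * f y))
        - (∫ y in Set.Icc (0:ℝ) 1, haarKernel k x y * (c y * f y))
        - gOne k k' f x * (∫ y in Set.Icc (0:ℝ) 1, c y * f y)
        - (∫ y in Set.Icc (0:ℝ) 1, gOne k k' f y * (c y * f y))
        + ccC k k' f * ∫ y in Set.Icc (0:ℝ) 1, c y * f y :=
    funext fun x => Tker_repr hd hfF hF0 hk hk' hcm hc2 x
  rw [this]
  exact ((((h1.sub h2).sub ((measurable_gOne hd).mul_const _)).sub
    measurable_const).add measurable_const)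

lemma Tker_sq_bound :
    Integrable (fun x => Tker k k' f c x ^ 2 * f x) μ01
    ∧ ∫ x in Set.Icc (0:ℝ) 1, Tker k k' f c x ^ 2 * f x
        ≤ 25 * F ^ 2 * ∫ y in Set.Icc (0:ℝ) 1, c y ^ 2 * f y := by
  obtain ⟨hm1, ⟨M1, hb1⟩, hq1, hint1⟩ := TK_bound hd hfF hF0 hk' hcm hc2
  obtain ⟨hm2, ⟨M2, hb2⟩, hq2, hint2⟩ := TK_bound hd hfF hF0 hk hcm hc2
  set Γ := ∫ y in Set.Icc (0:ℝ) 1, c y ^ 2 * f y with hΓdef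
  have hΓ0 : 0 ≤ Γ :=
    setIntegral_nonneg measurableSet_Icc fun y hy => mul_nonneg (sq_nonneg _) (hd.2.1 y hy)
  set J := ∫ y in Set.Icc (0:ℝ) 1, c y * f y with hJdef
  set W := ∫ y in Set.Icc (0:ℝ) 1, gOne k k' f y * (c y * f y) with hWdef
  -- J^2 ≤ Γ
  have hone : Integrable (fun y => (1:ℝ) ^ 2 * f y) μ01 := by simpa using integrable_f hd
  have hJcs := weighted_CS hd (measurable_const (a := (1:ℝ))) hcm hone hc2
  have hJ2 : J ^ 2 ≤ Γ := by
    have e1 : (fun y => (1:ℝ) * c y * f y) = fun y => c y * f y := by funext y; ring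
    have e2 : (fun y => (1:ℝ) ^ 2 * f y) = f := by funext y; simp
    rw [e1, e2] at hJcs
    rw [hd.2.2, Real.sqrt_one, one_mul] at hJcs
    calc J ^ 2 = |J| ^ 2 := (sq_abs _).symm
      _ ≤ Real.sqrt Γ ^ 2 := pow_le_pow_left₀ (abs_nonneg _) hJcs 2
      _ = Γ := Real.sq_sqrt hΓ0
  -- ∫ gOne^2 f ≤ F^2
  have hg1sq_int : Integrable (fun y => gOne k k' f y ^ 2 * f y) μ01 :=
    int_bdd_mul hd ((measurable_gOne hd).pow_const 2) (M := F ^ 2) (fun y => by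
      rw [abs_of_nonneg (sq_nonneg _)]
      have h := abs_gOne_le hd hfF hF0 hk hk' y
      calc gOne k k' f y ^ 2 = |gOne k k' f y| ^ 2 := (sq_abs _).symm
        _ ≤ F ^ 2 := pow_le_pow_left₀ (abs_nonneg _) h 2)
  have hg1sq_le : ∫ y in Set.Icc (0:ℝ) 1, gOne k k' f y ^ 2 * f y ≤ F ^ 2 := by
    calc ∫ y in Set.Icc (0:ℝ) 1, gOne k k' f y ^ 2 * f y
        ≤ ∫ y in Set.Icc (0:ℝ) 1, F ^ 2 * f y := by
          apply integral_mono_of_nonneg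
          · exact (f_ae_nonneg hd).mono fun y hy => mul_nonneg (sq_nonneg _) hy
          · exact (integrable_f hd).const_mul _
          · refine (f_ae_nonneg hd).mono fun y hy => ?_
            show gOne k k' f y ^ 2 * f y ≤ F ^ 2 * f y
            refine mul_le_mul_of_nonneg_right ?_ hy
            have h := abs_gOne_le hd hfF hF0 hk hk' y
            calc gOne k k' f y ^ 2 = |gOne k k' f y| ^ 2 := (sq_abs _).symm
              _ ≤ F ^ 2 := pow_le_pow_left₀ (abs_nonneg _) h 2
      _ = F ^ 2 := by rw [integral_const_mul, hd.2.2, mul_one]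
  have hg1sq_nonneg : 0 ≤ ∫ y in Set.Icc (0:ℝ) 1, gOne k k' f y ^ 2 * f y :=
    setIntegral_nonneg measurableSet_Icc fun y hy => mul_nonneg (sq_nonneg _) (hd.2.1 y hy)
  -- W^2 ≤ F^2 * Γ
  have hWcs := weighted_CS hd (measurable_gOne hd) hcm hg1sq_int hc2
  have hW2 : W ^ 2 ≤ F ^ 2 * Γ := by
    have e1 : (fun y => gOne k k' f y * c y * f y) = fun y => gOne k k' f y * (c y * f y) := by
      funext y; ring
    rw [e1] at hWcs
    have h2 : Real.sqrt (∫ y in Set.Icc (0:ℝ) 1, gOne k k' f y ^ 2 * f y) ≤ F := by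
      rw [show F = Real.sqrt (F ^ 2) by rw [Real.sqrt_sq hF0]]
      exact Real.sqrt_le_sqrt hg1sq_le
    have h3 : |W| ≤ F * Real.sqrt Γ := by
      refine le_trans hWcs ?_
      exact mul_le_mul_of_nonneg_right h2 (Real.sqrt_nonneg _)
    calc W ^ 2 = |W| ^ 2 := (sq_abs _).symm
      _ ≤ (F * Real.sqrt Γ) ^ 2 := pow_le_pow_left₀ (abs_nonneg _)
          h3 2
      _ = F ^ 2 * Γ := by rw [mul_pow, Real.sq_sqrt hΓ0]
  have hcc2 : ccC k k' f ^ 2 ≤ F ^ 2 := by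
    have h := abs_ccC_le hd hfF hF0 hk hk'
    calc ccC k k' f ^ 2 = |ccC k k' f| ^ 2 := (sq_abs _).symm
      _ ≤ F ^ 2 := pow_le_pow_left₀ (abs_nonneg _) h 2
  -- integrability of Tker^2 f
  have hTm : Measurable (Tker k k' f c) := measurable_Tker hd hfF hF0 hk hk' hcm hc2
  set T1 := fun x => ∫ y in Set.Icc (0:ℝ) 1, haarKernel k' x y * (c y * f y) with hT1
  set T2 := fun x => ∫ y in Set.Icc (0:ℝ) 1, haarKernel k x y * (c y * f y) with hT2
  set e := ccC k k' f with he
  have hTb : ∀ x, |Tker k k' f c x| ≤ M1 + M2 + F * |J| + |W| + |e| * |J| := by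
    intro x
    rw [Tker_repr hd hfF hF0 hk hk' hcm hc2 x]
    have h1 := abs_le.mp (hb1 x)
    have h2 := abs_le.mp (hb2 x)
    have h3 : |gOne k k' f x * J| ≤ F * |J| := by
      rw [abs_mul]
      exact mul_le_mul_of_nonneg_right (abs_gOne_le hd hfF hF0 hk hk' x) (abs_nonneg _)
    have h3' := abs_le.mp h3
    have h4 : |e * J| = |e| * |J| := abs_mul _ _
    have h4a := neg_abs_le (e * J)
    have h4b := le_abs_self (e * J)
    have h5a := neg_abs_le W
    have h5b := le_abs_self W
    rw [h4] at h4a h4b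
    exact abs_le.mpr ⟨by linarith [h1.1, h2.2, h3'.2], by linarith [h1.2, h2.1, h3'.1]⟩
  have hM0 : 0 ≤ M1 + M2 + F * |J| + |W| + |e| * |J| :=
    le_trans (abs_nonneg _) (hTb 0)
  have hTint : Integrable (fun x => Tker k k' f c x ^ 2 * f x) μ01 := by
    refine int_bdd_mul hd (hTm.pow_const 2)
      (M := (M1 + M2 + F * |J| + |W| + |e| * |J|) ^ 2) (fun x => ?_)
    rw [abs_of_nonneg (sq_nonneg _)]
    calc Tker k k' f c x ^ 2 = |Tker k k' f c x| ^ 2 := (sq_abs _).symm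
      _ ≤ (M1 + M2 + F * |J| + |W| + |e| * |J|) ^ 2 :=
          pow_le_pow_left₀ (abs_nonneg _) (hTb x) 2
  refine ⟨hTint, ?_⟩
  -- pointwise bound and integration
  have hr1 : Integrable (fun x => 5 * (T1 x ^ 2 * f x)) μ01 := hq1.const_mul 5
  have hr2 : Integrable (fun x => 5 * (T2 x ^ 2 * f x)) μ01 := hq2.const_mul 5
  have hr3 : Integrable (fun x => (5 * J ^ 2) * (gOne k k' f x ^ 2 * f x)) μ01 :=
    hg1sq_int.const_mul _
  have hr4 : Integrable (fun x => (5 * (W ^ 2 + e ^ 2 * J ^ 2)) * f x) μ01 :=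
    (integrable_f hd).const_mul _
  have hr12 : Integrable (fun x => 5 * (T1 x ^ 2 * f x) + 5 * (T2 x ^ 2 * f x)) μ01 :=
    hr1.add hr2
  have hr123 : Integrable (fun x => 5 * (T1 x ^ 2 * f x) + 5 * (T2 x ^ 2 * f x)
      + (5 * J ^ 2) * (gOne k k' f x ^ 2 * f x)) μ01 := hr12.add hr3
  have hmono : ∫ x in Set.Icc (0:ℝ) 1, Tker k k' f c x ^ 2 * f x
      ≤ ∫ x in Set.Icc (0:ℝ) 1, (5 * (T1 x ^ 2 * f x) + 5 * (T2 x ^ 2 * f x)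
          + (5 * J ^ 2) * (gOne k k' f x ^ 2 * f x)
          + (5 * (W ^ 2 + e ^ 2 * J ^ 2)) * f x) := by
    apply integral_mono_of_nonneg
    · exact (f_ae_nonneg hd).mono fun x hx => mul_nonneg (sq_nonneg _) hx
    · exact hr123.add hr4
    · refine (f_ae_nonneg hd).mono fun x hx => ?_
      show Tker k k' f c x ^ 2 * f x ≤ _
      have hp : Tker k k' f c x ^ 2
          ≤ 5 * (T1 x ^ 2 + T2 x ^ 2 + (gOne k k' f x * J) ^ 2 + W ^ 2 + (e * J) ^ 2) := by
        rw [Tker_repr hd hfF hF0 hk hk' hcm hc2 x]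
        exact five_sq _ _ _ _ _
      calc Tker k k' f c x ^ 2 * f x
          ≤ (5 * (T1 x ^ 2 + T2 x ^ 2 + (gOne k k' f x * J) ^ 2 + W ^ 2 + (e * J) ^ 2)) * f x :=
            mul_le_mul_of_nonneg_right hp hx
        _ = 5 * (T1 x ^ 2 * f x) + 5 * (T2 x ^ 2 * f x)
            + (5 * J ^ 2) * (gOne k k' f x ^ 2 * f x)
            + (5 * (W ^ 2 + e ^ 2 * J ^ 2)) * f x := by ring
  refine le_trans hmono ?_
  rw [integral_add hr123 hr4, integral_add hr12 hr3, integral_add hr1 hr2,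
    integral_const_mul, integral_const_mul, integral_const_mul, integral_const_mul]
  have b1 : 5 * ∫ x in Set.Icc (0:ℝ) 1, T1 x ^ 2 * f x ≤ 5 * (F ^ 2 * Γ) := by
    have := hint1
    linarith
  have b2 : 5 * ∫ x in Set.Icc (0:ℝ) 1, T2 x ^ 2 * f x ≤ 5 * (F ^ 2 * Γ) := by
    have := hint2
    linarith
  have b3 : (5 * J ^ 2) * ∫ x in Set.Icc (0:ℝ) 1, gOne k k' f x ^ 2 * f x
      ≤ 5 * (F ^ 2 * Γ) := by
    have h1 : (5 * J ^ 2) * ∫ x in Set.Icc (0:ℝ) 1, gOne k k' f x ^ 2 * f x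
        ≤ (5 * J ^ 2) * F ^ 2 :=
      mul_le_mul_of_nonneg_left hg1sq_le (by positivity)
    nlinarith [hJ2, sq_nonneg F, sq_nonneg J]
  have b4 : (5 * (W ^ 2 + e ^ 2 * J ^ 2)) * ∫ x in Set.Icc (0:ℝ) 1, f x
      ≤ 10 * (F ^ 2 * Γ) := by
    rw [hd.2.2, mul_one]
    have hcJ : e ^ 2 * J ^ 2 ≤ F ^ 2 * Γ := by
      nlinarith [hJ2, hcc2, sq_nonneg e, sq_nonneg J, sq_nonneg F, hΓ0]
    linarith [hW2]
  linarith [b1, b2, b3, b4]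

end TT

end HaarAux6



namespace HaarAux7
open HaarAux HaarAux2 HaarAux3 HaarAux4 HaarAux5 HaarAux6

local notation "μ01" => (volume.restrict (Set.Icc (0:ℝ) 1))

variable {f : ℝ → ℝ} {F : ℝ} {k k' : ℕ}

lemma honest_A2 (hd : IsDensity f) (hfF : ∀ x ∈ Set.Icc (0:ℝ) 1, f x ≤ F) (hF0 : 0 ≤ F)
    (hk : 0 < k) (hk' : 0 < k') (n : ℕ) (a b : ℕ → ℝ → ℝ)
    (ham : ∀ i, Measurable (a i)) (hbm : ∀ j, Measurable (b j))
    (hAint : Integrable (fun x => (∑ i ∈ Finset.range n, a i x ^ 2) * f x) μ01)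
    (hA : (∫ x in Set.Icc (0:ℝ) 1, (∑ i ∈ Finset.range n, a i x ^ 2) * f x) ≤ 1)
    (hBint : Integrable (fun y => (∑ j ∈ Finset.range n, b j y ^ 2) * f y) μ01)
    (hB : (∫ y in Set.Icc (0:ℝ) 1, (∑ j ∈ Finset.range n, b j y ^ 2) * f y) ≤ 1) :
    |∫ x in Set.Icc (0:ℝ) 1, ∫ y in Set.Icc (0:ℝ) 1,
        degKernel k k' f x y *
          (∑ i ∈ Finset.range n, ∑ j ∈ Finset.range i, a i x * b j y) * f x * f y|
      ≤ 5 * F * n := by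
  classical
  set B : ℕ → ℝ → ℝ := fun i y => ∑ j ∈ Finset.range i, b j y with hBdef
  have hBm : ∀ i, Measurable (B i) := fun i => Finset.measurable_sum _ fun j _ => hbm j
  -- integrability of B i ^2 f for i ≤ n
  have hBi2 : ∀ i, i ≤ n → Integrable (fun y => B i y ^ 2 * f y) μ01 := by
    intro i hin
    refine Integrable.mono' (hBint.const_mul (n : ℝ))
      (((hBm i).pow_const 2).mul hd.1).aestronglyMeasurable ?_
    refine (f_ae_nonneg hd).mono fun y hy => ?_
    rw [Real.norm_eq_abs, abs_of_nonneg (mul_nonneg (sq_nonneg _) hy)]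
    have h1 : B i y ^ 2 ≤ (i : ℝ) * ∑ j ∈ Finset.range i, b j y ^ 2 :=
      sq_sum_le_card_mul i (fun j => b j y)
    have h2 : ∑ j ∈ Finset.range i, b j y ^ 2 ≤ ∑ j ∈ Finset.range n, b j y ^ 2 :=
      Finset.sum_le_sum_of_subset_of_nonneg
        (Finset.range_subset_range.mpr hin) (fun j _ _ => sq_nonneg _)
    have h3 : (i : ℝ) ≤ (n : ℝ) := by exact_mod_cast hin
    have h4 : B i y ^ 2 ≤ (n : ℝ) * ∑ j ∈ Finset.range n, b j y ^ 2 := by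
      refine le_trans h1 ?_
      have h5 : 0 ≤ ∑ j ∈ Finset.range i, b j y ^ 2 :=
        Finset.sum_nonneg fun j _ => sq_nonneg _
      nlinarith [Finset.sum_nonneg (fun j _ => sq_nonneg (b j y)) (s := Finset.range n)]
    calc B i y ^ 2 * f y ≤ ((n : ℝ) * ∑ j ∈ Finset.range n, b j y ^ 2) * f y :=
          mul_le_mul_of_nonneg_right h4 hy
      _ = (n : ℝ) * ((∑ j ∈ Finset.range n, b j y ^ 2) * f y) := by ring
  have hγB : ∀ i, i ≤ n → (∫ y in Set.Icc (0:ℝ) 1, B i y ^ 2 * f y) ≤ (n : ℝ) := by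
    intro i hin
    calc ∫ y in Set.Icc (0:ℝ) 1, B i y ^ 2 * f y
        ≤ ∫ y in Set.Icc (0:ℝ) 1, (n : ℝ) * ((∑ j ∈ Finset.range n, b j y ^ 2) * f y) := by
          apply integral_mono_of_nonneg
          · exact (f_ae_nonneg hd).mono fun y hy => mul_nonneg (sq_nonneg _) hy
          · exact hBint.const_mul _
          · refine (f_ae_nonneg hd).mono fun y hy => ?_
            show B i y ^ 2 * f y ≤ _
            have h1 : B i y ^ 2 ≤ (i : ℝ) * ∑ j ∈ Finset.range i, b j y ^ 2 :=
              sq_sum_le_card_mul i (fun j => b j y)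
            have h2 : ∑ j ∈ Finset.range i, b j y ^ 2 ≤ ∑ j ∈ Finset.range n, b j y ^ 2 :=
              Finset.sum_le_sum_of_subset_of_nonneg
                (Finset.range_subset_range.mpr hin) (fun j _ _ => sq_nonneg _)
            have h3 : (i : ℝ) ≤ (n : ℝ) := by exact_mod_cast hin
            have h4 : B i y ^ 2 ≤ (n : ℝ) * ∑ j ∈ Finset.range n, b j y ^ 2 := by
              refine le_trans h1 ?_
              nlinarith [Finset.sum_nonneg (fun j _ => sq_nonneg (b j y)) (s := Finset.range n),
                Finset.sum_nonneg (fun j _ => sq_nonneg (b j y)) (s := Finset.range i)]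
            calc B i y ^ 2 * f y ≤ ((n : ℝ) * ∑ j ∈ Finset.range n, b j y ^ 2) * f y :=
                  mul_le_mul_of_nonneg_right h4 hy
              _ = (n : ℝ) * ((∑ j ∈ Finset.range n, b j y ^ 2) * f y) := by ring
      _ = (n : ℝ) * ∫ y in Set.Icc (0:ℝ) 1, (∑ j ∈ Finset.range n, b j y ^ 2) * f y :=
          integral_const_mul _ _
      _ ≤ (n : ℝ) * 1 := mul_le_mul_of_nonneg_left hB (Nat.cast_nonneg n)
      _ = (n : ℝ) := mul_one _
  -- a-side
  have hai2 : ∀ i, i ∈ Finset.range n → Integrable (fun x => a i x ^ 2 * f x) μ01 := by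
    intro i hin
    refine Integrable.mono' hAint
      (((ham i).pow_const 2).mul hd.1).aestronglyMeasurable ?_
    refine (f_ae_nonneg hd).mono fun x hx => ?_
    rw [Real.norm_eq_abs, abs_of_nonneg (mul_nonneg (sq_nonneg _) hx)]
    refine mul_le_mul_of_nonneg_right ?_ hx
    exact Finset.single_le_sum (fun j _ => sq_nonneg (a j x)) hin
  have hα0 : ∀ i, 0 ≤ ∫ x in Set.Icc (0:ℝ) 1, a i x ^ 2 * f x := fun i =>
    setIntegral_nonneg measurableSet_Icc fun x hx => mul_nonneg (sq_nonneg _) (hd.2.1 x hx)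
  have hαsum : ∑ i ∈ Finset.range n, (∫ x in Set.Icc (0:ℝ) 1, a i x ^ 2 * f x) ≤ 1 := by
    have e : ∑ i ∈ Finset.range n, (∫ x in Set.Icc (0:ℝ) 1, a i x ^ 2 * f x)
        = ∫ x in Set.Icc (0:ℝ) 1, ∑ i ∈ Finset.range n, a i x ^ 2 * f x :=
      (integral_finset_sum _ hai2).symm
    rw [e]
    have e2 : (fun x => ∑ i ∈ Finset.range n, a i x ^ 2 * f x)
        = fun x => (∑ i ∈ Finset.range n, a i x ^ 2) * f x := by
      funext x
      rw [Finset.sum_mul]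
    rw [e2]
    exact hA
  -- rewrite the double integral
  have hTprops : ∀ i, i ≤ n → Integrable (fun x => Tker k k' f (B i) x ^ 2 * f x) μ01
      ∧ (∫ x in Set.Icc (0:ℝ) 1, Tker k k' f (B i) x ^ 2 * f x)
          ≤ 25 * F ^ 2 * ∫ y in Set.Icc (0:ℝ) 1, B i y ^ 2 * f y :=
    fun i hin => Tker_sq_bound hd hfF hF0 hk hk' (hBm i) (hBi2 i hin)
  have hinner : ∀ x, (∫ y in Set.Icc (0:ℝ) 1,
      degKernel k k' f x y *
        (∑ i ∈ Finset.range n, ∑ j ∈ Finset.range i, a i x * b j y) * f x * f y)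
      = ∑ i ∈ Finset.range n, (a i x * f x) * Tker k k' f (B i) x := by
    intro x
    have e1 : (fun y => degKernel k k' f x y *
        (∑ i ∈ Finset.range n, ∑ j ∈ Finset.range i, a i x * b j y) * f x * f y)
        = fun y => ∑ i ∈ Finset.range n,
            (a i x * f x) * (degKernel k k' f x y * B i y * f y) := by
      funext y
      have e0 : ∑ i ∈ Finset.range n, ∑ j ∈ Finset.range i, a i x * b j y
          = ∑ i ∈ Finset.range n, a i x * B i y :=
        Finset.sum_congr rfl fun i _ => (Finset.mul_sum _ _ _).symm
      rw [e0, Finset.mul_sum, Finset.sum_mul, Finset.sum_mul]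
      exact Finset.sum_congr rfl fun i _ => by ring
    rw [e1]
    have hterm : ∀ i ∈ Finset.range n, Integrable
        (fun y => (a i x * f x) * (degKernel k k' f x y * B i y * f y)) μ01 := by
      intro i hin
      refine Integrable.const_mul ?_ _
      have hBf : Integrable (fun y => B i y * f y) μ01 :=
        integrable_cf hd (hBm i) (hBi2 i (le_of_lt (Finset.mem_range.mp hin)))
      have e2 : (fun y => degKernel k k' f x y * B i y * f y)
          = fun y => degKernel k k' f x y * (B i y * f y) :=
        funext fun y => mul_assoc _ _ _
      rw [e2]
      exact hBf.bdd_mul (measurable_degKernel_right hd x).aestronglyMeasurable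
        (ae_of_all _ fun y => by
          rw [Real.norm_eq_abs]
          exact abs_degKernel_le hd hfF hF0 hk hk' x y)
    rw [integral_finset_sum _ hterm]
    exact Finset.sum_congr rfl fun i _ => integral_const_mul _ _
  have houter : (fun x => ∫ y in Set.Icc (0:ℝ) 1,
      degKernel k k' f x y *
        (∑ i ∈ Finset.range n, ∑ j ∈ Finset.range i, a i x * b j y) * f x * f y)
      = fun x => ∑ i ∈ Finset.range n, a i x * Tker k k' f (B i) x * f x := by
    funext x
    rw [hinner x]
    exact Finset.sum_congr rfl fun i _ => by ring
  rw [houter]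
  have hterm_int : ∀ i ∈ Finset.range n,
      Integrable (fun x => a i x * Tker k k' f (B i) x * f x) μ01 := by
    intro i hin
    have hile : i ≤ n := le_of_lt (Finset.mem_range.mp hin)
    exact integrable_mul_mul hd (ham i)
      (measurable_Tker hd hfF hF0 hk hk' (hBm i) (hBi2 i hile))
      (hai2 i hin) (hTprops i hile).1
  rw [integral_finset_sum _ hterm_int]
  -- bound each term by Cauchy-Schwarz
  have hstep : ∀ i ∈ Finset.range n,
      |∫ x in Set.Icc (0:ℝ) 1, a i x * Tker k k' f (B i) x * f x|
        ≤ Real.sqrt (∫ x in Set.Icc (0:ℝ) 1, a i x ^ 2 * f x)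
            * (5 * F * Real.sqrt n) := by
    intro i hin
    have hile : i ≤ n := le_of_lt (Finset.mem_range.mp hin)
    have hcs := weighted_CS hd (ham i)
      (measurable_Tker hd hfF hF0 hk hk' (hBm i) (hBi2 i hile))
      (hai2 i hin) (hTprops i hile).1
    refine le_trans hcs ?_
    refine mul_le_mul_of_nonneg_left ?_ (Real.sqrt_nonneg _)
    have h1 : (∫ x in Set.Icc (0:ℝ) 1, Tker k k' f (B i) x ^ 2 * f x)
        ≤ 25 * F ^ 2 * (n : ℝ) := by
      refine le_trans (hTprops i hile).2 ?_
      have := hγB i hile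
      nlinarith [sq_nonneg F]
    calc Real.sqrt (∫ x in Set.Icc (0:ℝ) 1, Tker k k' f (B i) x ^ 2 * f x)
        ≤ Real.sqrt (25 * F ^ 2 * (n : ℝ)) := Real.sqrt_le_sqrt h1
      _ = 5 * F * Real.sqrt n := by
          rw [show (25 : ℝ) * F ^ 2 * (n : ℝ) = (5 * F) ^ 2 * (n : ℝ) by ring,
            Real.sqrt_mul (sq_nonneg _), Real.sqrt_sq (by positivity)]
  calc |∑ i ∈ Finset.range n, ∫ x in Set.Icc (0:ℝ) 1, a i x * Tker k k' f (B i) x * f x|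
      ≤ ∑ i ∈ Finset.range n,
          |∫ x in Set.Icc (0:ℝ) 1, a i x * Tker k k' f (B i) x * f x| :=
        Finset.abs_sum_le_sum_abs _ _
    _ ≤ ∑ i ∈ Finset.range n, Real.sqrt (∫ x in Set.Icc (0:ℝ) 1, a i x ^ 2 * f x)
          * (5 * F * Real.sqrt n) := Finset.sum_le_sum hstep
    _ = (∑ i ∈ Finset.range n, Real.sqrt (∫ x in Set.Icc (0:ℝ) 1, a i x ^ 2 * f x))
          * (5 * F * Real.sqrt n) := by rw [Finset.sum_mul]
    _ ≤ (Real.sqrt n * Real.sqrt (∑ i ∈ Finset.range n,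
          ∫ x in Set.Icc (0:ℝ) 1, a i x ^ 2 * f x)) * (5 * F * Real.sqrt n) := by
        refine mul_le_mul_of_nonneg_right ?_ (by positivity)
        exact sum_sqrt_le n _ hα0
    _ ≤ (Real.sqrt n * 1) * (5 * F * Real.sqrt n) := by
        refine mul_le_mul_of_nonneg_right (mul_le_mul_of_nonneg_left ?_ (Real.sqrt_nonneg _))
          (by positivity)
        exact Real.sqrt_le_one.mpr hαsum
    _ = 5 * F * (Real.sqrt n * Real.sqrt n) := by ring
    _ = 5 * F * n := by rw [Real.mul_self_sqrt (Nat.cast_nonneg n)]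

end HaarAux7

namespace HaarAux8
open HaarAux HaarAux2 HaarAux3 HaarAux4 HaarAux5 HaarAux6 HaarAux7

local notation "μ01" => (volume.restrict (Set.Icc (0:ℝ) 1))

lemma cast_mul_sub_nonneg (n : ℕ) : 0 ≤ (n : ℝ) * ((n : ℝ) - 1) := by
  rcases Nat.eq_zero_or_pos n with h | h
  · subst h; simp
  · have : (1:ℝ) ≤ (n:ℝ) := by exact_mod_cast h
    nlinarith

theorem evaluation_aux (F : ℝ) (hF : 0 < F) :
    ∃ C > 0, ∀ k k' n : ℕ, 0 < k → k ≤ k' →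
      ∀ f : ℝ → ℝ, IsDensity f → (∀ x ∈ Set.Icc (0:ℝ) 1, f x ≤ F) →
        quadA1 k k' n f ^ 2 ≤ C * ((n : ℝ) * ((n : ℝ) - 1)) * ((k' : ℝ) + k) ∧
        quadA2 k k' n f ≤ C * n ∧
        quadA3 k k' n f ^ 2 ≤ C * n * ((k' : ℝ) + k) ∧
        quadA4 k k' f ≤ C * ((k' : ℝ) + k) := by
  refine ⟨20 * (F + 1) ^ 2, by positivity, ?_⟩
  intro k k' n hk hkk f hd hfF
  have hF0 : 0 ≤ F := le_of_lt hF
  have hk' : 0 < k' := lt_of_lt_of_le hk hkk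
  set C : ℝ := 20 * (F + 1) ^ 2 with hC
  have hC0 : 0 < C := by positivity
  have hkk2 : (2:ℝ) ≤ (k':ℝ) + k := by
    have h1 : (1:ℝ) ≤ (k':ℝ) := by exact_mod_cast hk'
    have h2 : (1:ℝ) ≤ (k:ℝ) := by exact_mod_cast hk
    linarith
  have hkk0 : (0:ℝ) ≤ (k':ℝ) + k := by linarith
  have hC0' : 8 * F + 6 * F ^ 2 ≤ C := by rw [hC]; nlinarith
  -- D bounds
  have hD_le : ∀ x : ℝ, (∫ y in Set.Icc (0:ℝ) 1, degKernel k k' f x y ^ 2 * f y)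
      ≤ (8 * F + 6 * F ^ 2) * ((k':ℝ) + k) := fun x => D_le hd hfF hF0 hk hk' x
  have hD0 : ∀ x : ℝ, 0 ≤ ∫ y in Set.Icc (0:ℝ) 1, degKernel k k' f x y ^ 2 * f y :=
    fun x => D_nonneg hd x
  constructor
  · -- A1
    have hS0 : 0 ≤ ∫ x in Set.Icc (0:ℝ) 1, ∫ y in Set.Icc (0:ℝ) 1,
        degKernel k k' f x y ^ 2 * f x * f y := by
      apply setIntegral_nonneg measurableSet_Icc
      intro x hx
      apply setIntegral_nonneg measurableSet_Icc
      intro y hy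
      exact mul_nonneg (mul_nonneg (sq_nonneg _) (hd.2.1 x hx)) (hd.2.1 y hy)
    have hnn := cast_mul_sub_nonneg n
    rw [quadA1, Real.sq_sqrt (mul_nonneg hnn hS0)]
    have hinner : ∀ x : ℝ, (∫ y in Set.Icc (0:ℝ) 1, degKernel k k' f x y ^ 2 * f x * f y)
        = f x * ∫ y in Set.Icc (0:ℝ) 1, degKernel k k' f x y ^ 2 * f y := by
      intro x
      rw [← integral_const_mul]
      congr 1
      funext y
      ring
    have houter : (∫ x in Set.Icc (0:ℝ) 1, ∫ y in Set.Icc (0:ℝ) 1,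
        degKernel k k' f x y ^ 2 * f x * f y) ≤ (8 * F + 6 * F ^ 2) * ((k':ℝ) + k) := by
      have step : (∫ x in Set.Icc (0:ℝ) 1, ∫ y in Set.Icc (0:ℝ) 1,
          degKernel k k' f x y ^ 2 * f x * f y)
          ≤ ∫ x in Set.Icc (0:ℝ) 1, ((8 * F + 6 * F ^ 2) * ((k':ℝ) + k)) * f x := by
        apply integral_mono_of_nonneg
        · refine (f_ae_nonneg hd).mono fun x hx => ?_
          show (0:ℝ) ≤ ∫ y in Set.Icc (0:ℝ) 1, degKernel k k' f x y ^ 2 * f x * f y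
          rw [hinner x]
          exact mul_nonneg hx (hD0 x)
        · exact (integrable_f hd).const_mul _
        · refine (f_ae_nonneg hd).mono fun x hx => ?_
          show (∫ y in Set.Icc (0:ℝ) 1, degKernel k k' f x y ^ 2 * f x * f y) ≤ _
          rw [hinner x]
          calc f x * ∫ y in Set.Icc (0:ℝ) 1, degKernel k k' f x y ^ 2 * f y
              ≤ f x * ((8 * F + 6 * F ^ 2) * ((k':ℝ) + k)) :=
                mul_le_mul_of_nonneg_left (hD_le x) hx
            _ = ((8 * F + 6 * F ^ 2) * ((k':ℝ) + k)) * f x := mul_comm _ _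
      rw [integral_const_mul, hd.2.2, mul_one] at step
      exact step
    calc (n : ℝ) * ((n : ℝ) - 1) * ∫ x in Set.Icc (0:ℝ) 1, ∫ y in Set.Icc (0:ℝ) 1,
          degKernel k k' f x y ^ 2 * f x * f y
        ≤ (n : ℝ) * ((n : ℝ) - 1) * ((8 * F + 6 * F ^ 2) * ((k':ℝ) + k)) :=
          mul_le_mul_of_nonneg_left houter hnn
      _ = (8 * F + 6 * F ^ 2) * ((n : ℝ) * ((n : ℝ) - 1)) * ((k':ℝ) + k) := by ring
      _ ≤ C * ((n : ℝ) * ((n : ℝ) - 1)) * ((k':ℝ) + k) := by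
          apply mul_le_mul_of_nonneg_right (mul_le_mul_of_nonneg_right hC0' hnn) hkk0
  refine ⟨?_, ?_, ?_⟩
  · -- A2
    rw [quadA2]
    by_cases hbdd : BddAbove {r : ℝ | ∃ a b : ℕ → ℝ → ℝ,
        (∀ i, Measurable (a i)) ∧ (∀ j, Measurable (b j)) ∧
        (∫ x in Set.Icc (0:ℝ) 1, (∑ i ∈ Finset.range n, a i x ^ 2) * f x) ≤ 1 ∧
        (∫ y in Set.Icc (0:ℝ) 1, (∑ j ∈ Finset.range n, b j y ^ 2) * f y) ≤ 1 ∧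
        r = |∫ x in Set.Icc (0:ℝ) 1, ∫ y in Set.Icc (0:ℝ) 1,
              degKernel k k' f x y *
                (∑ i ∈ Finset.range n, ∑ j ∈ Finset.range i, a i x * b j y) * f x * f y|}
    · apply Real.sSup_le _ (by positivity)
      rintro r ⟨a, b, ham, hbm, hA, hB, rfl⟩
      set r0 := |∫ x in Set.Icc (0:ℝ) 1, ∫ y in Set.Icc (0:ℝ) 1,
          degKernel k k' f x y *
            (∑ i ∈ Finset.range n, ∑ j ∈ Finset.range i, a i x * b j y) * f x * f y| with hr0
      rcases le_or_gt r0 (C * n) with hle | hgt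
      · exact hle
      exfalso
      have hr0pos : 0 < r0 := lt_of_le_of_lt (by positivity) hgt
      obtain ⟨M, hM⟩ := hbdd
      have hMge : r0 ≤ M := hM ⟨a, b, ham, hbm, hA, hB, rfl⟩
      set t : ℝ := (M + 1) / r0 with ht
      have ht0 : 0 < t := by
        apply div_pos ?_ hr0pos
        linarith [hr0pos, hMge]
      -- in either non-integrable case we scale
      by_cases hAint : Integrable (fun x => (∑ i ∈ Finset.range n, a i x ^ 2) * f x) μ01
      · by_cases hBint : Integrable (fun y => (∑ j ∈ Finset.range n, b j y ^ 2) * f y) μ01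
        · -- honest case : contradiction with hgt
          have hh := honest_A2 hd hfF hF0 hk hk' n a b ham hbm hAint hA hBint hB
          have : 5 * F * n ≤ C * n := by
            apply mul_le_mul_of_nonneg_right ?_ (Nat.cast_nonneg n)
            rw [hC]; nlinarith
          rw [← hr0] at hh
          linarith
        · -- scale b
          have hmem : (t * r0) ∈ {r : ℝ | ∃ a b : ℕ → ℝ → ℝ,
              (∀ i, Measurable (a i)) ∧ (∀ j, Measurable (b j)) ∧
              (∫ x in Set.Icc (0:ℝ) 1, (∑ i ∈ Finset.range n, a i x ^ 2) * f x) ≤ 1 ∧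
              (∫ y in Set.Icc (0:ℝ) 1, (∑ j ∈ Finset.range n, b j y ^ 2) * f y) ≤ 1 ∧
              r = |∫ x in Set.Icc (0:ℝ) 1, ∫ y in Set.Icc (0:ℝ) 1,
                    degKernel k k' f x y *
                      (∑ i ∈ Finset.range n, ∑ j ∈ Finset.range i, a i x * b j y) * f x * f y|} := by
            refine ⟨a, fun j y => t * b j y, ham, fun j => (hbm j).const_mul t, hA, ?_, ?_⟩
            · have hni : ¬ Integrable
                  (fun y => (∑ j ∈ Finset.range n, (t * b j y) ^ 2) * f y) μ01 := by
                intro h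
                apply hBint
                have h2 := h.const_mul (1 / t ^ 2)
                have e : (fun y => (1 / t ^ 2) * ((∑ j ∈ Finset.range n, (t * b j y) ^ 2) * f y))
                    = fun y => (∑ j ∈ Finset.range n, b j y ^ 2) * f y := by
                  funext y
                  have e2 : ∑ j ∈ Finset.range n, (t * b j y) ^ 2
                      = t ^ 2 * ∑ j ∈ Finset.range n, b j y ^ 2 := by
                    rw [Finset.mul_sum]
                    exact Finset.sum_congr rfl fun j _ => by ring
                  rw [e2]
                  field_simp
                rw [e] at h2
                exact h2
              rw [integral_undef hni]
              norm_num
            · have e : ∀ x, (∫ y in Set.Icc (0:ℝ) 1, degKernel k k' f x y *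
                  (∑ i ∈ Finset.range n, ∑ j ∈ Finset.range i, a i x * (t * b j y)) * f x * f y)
                  = t * ∫ y in Set.Icc (0:ℝ) 1, degKernel k k' f x y *
                      (∑ i ∈ Finset.range n, ∑ j ∈ Finset.range i, a i x * b j y) * f x * f y := by
                intro x
                rw [← integral_const_mul]
                congr 1
                funext y
                have e2 : ∑ i ∈ Finset.range n, ∑ j ∈ Finset.range i, a i x * (t * b j y)
                    = t * ∑ i ∈ Finset.range n, ∑ j ∈ Finset.range i, a i x * b j y := by
                  rw [Finset.mul_sum]
                  refine Finset.sum_congr rfl fun i _ => ?_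
                  rw [Finset.mul_sum]
                  exact Finset.sum_congr rfl fun j _ => by ring
                rw [e2]
                ring
              have e3 : (∫ x in Set.Icc (0:ℝ) 1, ∫ y in Set.Icc (0:ℝ) 1,
                  degKernel k k' f x y *
                    (∑ i ∈ Finset.range n, ∑ j ∈ Finset.range i, a i x * (t * b j y)) * f x * f y)
                  = t * ∫ x in Set.Icc (0:ℝ) 1, ∫ y in Set.Icc (0:ℝ) 1,
                      degKernel k k' f x y *
                        (∑ i ∈ Finset.range n, ∑ j ∈ Finset.range i, a i x * b j y) * f x * f y := by
                rw [← integral_const_mul]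
                congr 1
                funext x
                exact e x
              rw [e3, abs_mul, abs_of_pos ht0, hr0]
          have := hM hmem
          have htr : t * r0 = M + 1 := by
            rw [ht]
            field_simp
          rw [htr] at this
          linarith
      · -- scale a
        have hmem : (t * r0) ∈ {r : ℝ | ∃ a b : ℕ → ℝ → ℝ,
            (∀ i, Measurable (a i)) ∧ (∀ j, Measurable (b j)) ∧
            (∫ x in Set.Icc (0:ℝ) 1, (∑ i ∈ Finset.range n, a i x ^ 2) * f x) ≤ 1 ∧
            (∫ y in Set.Icc (0:ℝ) 1, (∑ j ∈ Finset.range n, b j y ^ 2) * f y) ≤ 1 ∧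
            r = |∫ x in Set.Icc (0:ℝ) 1, ∫ y in Set.Icc (0:ℝ) 1,
                  degKernel k k' f x y *
                    (∑ i ∈ Finset.range n, ∑ j ∈ Finset.range i, a i x * b j y) * f x * f y|} := by
          refine ⟨fun i x => t * a i x, b, fun i => (ham i).const_mul t, hbm, ?_, hB, ?_⟩
          · have hni : ¬ Integrable
                (fun x => (∑ i ∈ Finset.range n, (t * a i x) ^ 2) * f x) μ01 := by
              intro h
              apply hAint
              have h2 := h.const_mul (1 / t ^ 2)
              have e : (fun x => (1 / t ^ 2) * ((∑ i ∈ Finset.range n, (t * a i x) ^ 2) * f x))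
                  = fun x => (∑ i ∈ Finset.range n, a i x ^ 2) * f x := by
                funext x
                have e2 : ∑ i ∈ Finset.range n, (t * a i x) ^ 2
                    = t ^ 2 * ∑ i ∈ Finset.range n, a i x ^ 2 := by
                  rw [Finset.mul_sum]
                  exact Finset.sum_congr rfl fun i _ => by ring
                rw [e2]
                field_simp
              rw [e] at h2
              exact h2
            rw [integral_undef hni]
            norm_num
          · have e : ∀ x, (∫ y in Set.Icc (0:ℝ) 1, degKernel k k' f x y *
                (∑ i ∈ Finset.range n, ∑ j ∈ Finset.range i, (t * a i x) * b j y) * f x * f y)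
                = t * ∫ y in Set.Icc (0:ℝ) 1, degKernel k k' f x y *
                    (∑ i ∈ Finset.range n, ∑ j ∈ Finset.range i, a i x * b j y) * f x * f y := by
              intro x
              rw [← integral_const_mul]
              congr 1
              funext y
              have e2 : ∑ i ∈ Finset.range n, ∑ j ∈ Finset.range i, (t * a i x) * b j y
                  = t * ∑ i ∈ Finset.range n, ∑ j ∈ Finset.range i, a i x * b j y := by
                rw [Finset.mul_sum]
                refine Finset.sum_congr rfl fun i _ => ?_
                rw [Finset.mul_sum]
                exact Finset.sum_congr rfl fun j _ => by ring
              rw [e2]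
              ring
            have e3 : (∫ x in Set.Icc (0:ℝ) 1, ∫ y in Set.Icc (0:ℝ) 1,
                degKernel k k' f x y *
                  (∑ i ∈ Finset.range n, ∑ j ∈ Finset.range i, (t * a i x) * b j y) * f x * f y)
                = t * ∫ x in Set.Icc (0:ℝ) 1, ∫ y in Set.Icc (0:ℝ) 1,
                    degKernel k k' f x y *
                      (∑ i ∈ Finset.range n, ∑ j ∈ Finset.range i, a i x * b j y) * f x * f y := by
              rw [← integral_const_mul]
              congr 1
              funext x
              exact e x
            rw [e3, abs_mul, abs_of_pos ht0, hr0]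
        have := hM hmem
        have htr : t * r0 = M + 1 := by
          rw [ht]
          field_simp
        rw [htr] at this
        linarith
    · rw [Real.sSup_of_not_bddAbove hbdd]
      positivity
  · -- A3
    have hDbdd : BddAbove (Set.range fun x : ℝ =>
        ∫ y in Set.Icc (0:ℝ) 1, degKernel k k' f x y ^ 2 * f y) := by
      refine ⟨(8 * F + 6 * F ^ 2) * ((k':ℝ) + k), ?_⟩
      rintro _ ⟨x, rfl⟩
      exact hD_le x
    have hsup0 : 0 ≤ ⨆ x : ℝ, ∫ y in Set.Icc (0:ℝ) 1, degKernel k k' f x y ^ 2 * f y :=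
      le_trans (hD0 0) (le_ciSup hDbdd 0)
    rw [quadA3, Real.sq_sqrt (mul_nonneg (Nat.cast_nonneg n) hsup0)]
    have hsup_le : (⨆ x : ℝ, ∫ y in Set.Icc (0:ℝ) 1, degKernel k k' f x y ^ 2 * f y)
        ≤ (8 * F + 6 * F ^ 2) * ((k':ℝ) + k) := ciSup_le hD_le
    calc (n : ℝ) * ⨆ x : ℝ, ∫ y in Set.Icc (0:ℝ) 1, degKernel k k' f x y ^ 2 * f y
        ≤ (n : ℝ) * ((8 * F + 6 * F ^ 2) * ((k':ℝ) + k)) :=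
          mul_le_mul_of_nonneg_left hsup_le (Nat.cast_nonneg n)
      _ = (8 * F + 6 * F ^ 2) * (n : ℝ) * ((k':ℝ) + k) := by ring
      _ ≤ C * n * ((k':ℝ) + k) := by
          apply mul_le_mul_of_nonneg_right
            (mul_le_mul_of_nonneg_right hC0' (Nat.cast_nonneg n)) hkk0
  · -- A4
    rw [quadA4]
    refine ciSup_le fun x => ciSup_le fun y => ?_
    have h := abs_degKernel_le hd hfF hF0 hk hk' x y
    refine le_trans h ?_
    rw [hC]
    nlinarith [hkk2, hF0, hkk0]

end HaarAux8


/-- Lemma: evaluation of the quantities A₁,…,A₄ for Haar kernels, with a constant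
depending only on the sup-norm bound F of the density. -/
theorem evaluation_A1_to_A4 (F : ℝ) (hF : 0 < F) :
    ∃ C > 0, ∀ k k' n : ℕ, 0 < k → k ≤ k' →
      ∀ f : ℝ → ℝ, IsDensity f → (∀ x ∈ Set.Icc (0:ℝ) 1, f x ≤ F) →
        quadA1 k k' n f ^ 2 ≤ C * ((n : ℝ) * ((n : ℝ) - 1)) * ((k' : ℝ) + k) ∧
        quadA2 k k' n f ≤ C * n ∧
        quadA3 k k' n f ^ 2 ≤ C * n * ((k' : ℝ) + k) ∧
        quadA4 k k' f ≤ C * ((k' : ℝ) + k) :=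
  HaarAux8.evaluation_aux F hF
end
end

section
/- (Separation of functional values in the lower-bound construction.) Let T : ℝ → ℝ be three times differentiable with |T'''(u)| ≤ B for all u ∈ [0,2] and T''(1) > 0. Let h : ℝ → ℝ be a bounded measurable function supported in [0,1] with ∫₀¹ h = 0 and ∫₀¹ h² = c > 0, and fix β ∈ (0,1). Then there exist a constant C_T > 0 and an integer v₀ (both depending only on T, h, β) such that for every integer v ≥ v₀ and every sign vector (a₀,…,a_{v−1}) ∈ {−1,+1}^v, ∫₀¹ [ T( 1 + Σ_{i=0}^{v−1} a_i·v^{−β}·h(vx − i) ) − T(1) ] dx ≥ C_T·v^{−2β}. -/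
open MeasureTheory Set Filter


lemma taylor_cube_bound (T : ℝ → ℝ) (B : ℝ)
    (hT1 : Differentiable ℝ T) (hT2 : Differentiable ℝ (deriv T))
    (hT3 : Differentiable ℝ (deriv (deriv T)))
    (hT3bd : ∀ u ∈ Set.Icc (0:ℝ) 2, |deriv (deriv (deriv T)) u| ≤ B) :
    ∀ t : ℝ, |t| ≤ 1 →
      |T (1 + t) - T 1 - deriv T 1 * t - deriv (deriv T) 1 / 2 * t ^ 2| ≤ B * |t| ^ 3 := by
  set g : ℝ → ℝ := fun t => T (1 + t) - T 1 - deriv T 1 * t - deriv (deriv T) 1 / 2 * t ^ 2 with hg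
  set g1 : ℝ → ℝ := fun t => deriv T (1 + t) - deriv T 1 - deriv (deriv T) 1 * t with hg1
  set g2 : ℝ → ℝ := fun t => deriv (deriv T) (1 + t) - deriv (deriv T) 1 with hg2
  have hB0 : 0 ≤ B := le_trans (abs_nonneg _) (hT3bd 1 (by norm_num))
  have haff : ∀ t : ℝ, HasDerivAt (fun s : ℝ => 1 + s) 1 t := fun t => by
    simpa using (hasDerivAt_id t).const_add 1
  have hd2 : ∀ t : ℝ, HasDerivAt g2 (deriv (deriv (deriv T)) (1 + t)) t := by
    intro t
    have := ((hT3 (1 + t)).hasDerivAt.comp t (haff t)).sub_const (deriv (deriv T) 1)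
    simpa [hg2] using this
  have hd1 : ∀ t : ℝ, HasDerivAt g1 (g2 t) t := by
    intro t
    have h1 := ((hT2 (1 + t)).hasDerivAt.comp t (haff t)).sub_const (deriv T 1)
    have h2 := (hasDerivAt_id t).const_mul (deriv (deriv T) 1)
    have := h1.sub h2
    refine this.congr_deriv ?_
    simp [hg2]
  have hd0 : ∀ t : ℝ, HasDerivAt g (g1 t) t := by
    intro t
    have h1 := ((hT1 (1 + t)).hasDerivAt.comp t (haff t)).sub_const (T 1)
    have h2 := (hasDerivAt_id t).const_mul (deriv T 1)
    have h3 := (hasDerivAt_pow 2 t).const_mul (deriv (deriv T) 1 / 2)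
    have := (h1.sub h2).sub h3
    refine this.congr_deriv ?_
    simp [hg1]; ring
  have key2 : ∀ t ∈ Icc (-1:ℝ) 1, |g2 t| ≤ B * |t| := by
    intro t ht
    have := Convex.norm_image_sub_le_of_norm_hasDerivWithin_le
      (f := g2) (f' := fun x => deriv (deriv (deriv T)) (1 + x))
      (fun x hx => (hd2 x).hasDerivWithinAt)
      (fun x hx => by
        rw [Real.norm_eq_abs]
        exact hT3bd (1 + x) ⟨by linarith [hx.1], by linarith [hx.2]⟩)
      (convex_Icc _ _) (by norm_num : (0:ℝ) ∈ Icc (-1:ℝ) 1) ht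
    simpa [hg2, Real.norm_eq_abs] using this
  have habs : ∀ t : ℝ, ∀ s ∈ uIcc (0:ℝ) t, |s| ≤ |t| := by
    intro t s hs
    rw [Set.mem_uIcc] at hs
    rcases hs with ⟨h1, h2⟩ | ⟨h1, h2⟩
    · rw [abs_of_nonneg h1]; exact le_trans h2 (le_abs_self t)
    · rw [abs_of_nonpos h2]; exact le_trans (neg_le_neg h1) (neg_le_abs t)
  have hsub : ∀ t ∈ Icc (-1:ℝ) 1, uIcc (0:ℝ) t ⊆ Icc (-1:ℝ) 1 := by
    intro t ht
    exact Set.uIcc_subset_Icc (by norm_num) ht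
  have key1 : ∀ t ∈ Icc (-1:ℝ) 1, |g1 t| ≤ B * |t| * |t| := by
    intro t ht
    have := Convex.norm_image_sub_le_of_norm_hasDerivWithin_le
      (f := g1) (f' := g2) (s := uIcc (0:ℝ) t)
      (fun x hx => (hd1 x).hasDerivWithinAt)
      (fun x hx => by
        rw [Real.norm_eq_abs]
        calc |g2 x| ≤ B * |x| := key2 x (hsub t ht hx)
          _ ≤ B * |t| := by
            exact mul_le_mul_of_nonneg_left (habs t x hx) hB0)
      (convex_uIcc _ _) (Set.left_mem_uIcc) (Set.right_mem_uIcc)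
    have hz : g1 0 = 0 := by simp [hg1]
    rw [hz, sub_zero, sub_zero, Real.norm_eq_abs, Real.norm_eq_abs] at this
    exact this
  have key0 : ∀ t ∈ Icc (-1:ℝ) 1, |g t| ≤ B * |t| * |t| * |t| := by
    intro t ht
    have := Convex.norm_image_sub_le_of_norm_hasDerivWithin_le
      (f := g) (f' := g1) (s := uIcc (0:ℝ) t)
      (fun x hx => (hd0 x).hasDerivWithinAt)
      (fun x hx => by
        rw [Real.norm_eq_abs]
        calc |g1 x| ≤ B * |x| * |x| := key1 x (hsub t ht hx)
          _ ≤ B * |t| * |t| := by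
            have h1 := habs t x hx
            exact mul_le_mul (mul_le_mul_of_nonneg_left h1 hB0) h1 (abs_nonneg x)
              (by positivity))
      (convex_uIcc _ _) (Set.left_mem_uIcc) (Set.right_mem_uIcc)
    have hz : g 0 = 0 := by simp [hg]
    rw [hz, sub_zero, sub_zero, Real.norm_eq_abs, Real.norm_eq_abs] at this
    exact this
  intro t ht
  have : t ∈ Icc (-1:ℝ) 1 := abs_le.mp ht
  have := key0 t this
  calc |g t| ≤ B * |t| * |t| * |t| := this
    _ = B * |t| ^ 3 := by ring


lemma sq_sum_of_mul_eq_zero {n : ℕ} (b : Fin n → ℝ)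
    (hb : ∀ i j : Fin n, i ≠ j → b i * b j = 0) :
    (∑ i, b i) ^ 2 = ∑ i, b i ^ 2 := by
  rw [sq, Finset.sum_mul_sum]
  refine Finset.sum_congr rfl fun i _ => ?_
  rw [Finset.sum_eq_single i (fun j _ hj => hb i j (fun e => hj e.symm))
    (fun hi => absurd (Finset.mem_univ i) hi), ← sq]

lemma abs_sum_le_of_mul_eq_zero {n : ℕ} (b : Fin n → ℝ) (M : ℝ) (hM : 0 ≤ M)
    (hb : ∀ i j : Fin n, i ≠ j → b i * b j = 0) (hbM : ∀ i, |b i| ≤ M) :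
    |∑ i, b i| ≤ M := by
  by_cases hz : ∀ i, b i = 0
  · simp [hz, hM]
  · push_neg at hz
    obtain ⟨i₀, hi₀⟩ := hz
    rw [Finset.sum_eq_single i₀ (fun j _ hj => by
      rcases mul_eq_zero.mp (hb j i₀ hj) with h | h
      · exact h
      · exact absurd h hi₀) (fun hi => absurd (Finset.mem_univ i₀) hi)]
    exact hbM i₀

lemma scaled_integral (g : ℝ → ℝ) (hg : Measurable g) (Cg : ℝ) (hbd : ∀ x, |g x| ≤ Cg)
    (hsupp : ∀ x, x ∉ Set.Icc (0:ℝ) 1 → g x = 0) (v : ℕ) (hv : 1 ≤ v) (i : ℕ) (hi : i < v) :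
    ∫ x in Set.Icc (0:ℝ) 1, g ((v:ℝ) * x - i) = (v:ℝ)⁻¹ * ∫ x in Set.Icc (0:ℝ) 1, g x := by
  have hv0 : (0:ℝ) < v := by exact_mod_cast hv
  have hvne : (v:ℝ) ≠ 0 := ne_of_gt hv0
  have hgind : g = (Set.Icc (0:ℝ) 1).indicator g := by
    funext x
    by_cases hx : x ∈ Set.Icc (0:ℝ) 1
    · simp [hx]
    · simp [hx, hsupp x hx]
  haveI : Fact (volume (Set.Icc (0:ℝ) 1) < ⊤) := ⟨by simp [Real.volume_Icc]⟩
  have hgint : Integrable g := by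
    rw [hgind, integrable_indicator_iff measurableSet_Icc]
    exact ⟨hg.aestronglyMeasurable.restrict,
      HasFiniteIntegral.of_bounded (C := Cg) (ae_of_all _ fun x => by
        rw [Real.norm_eq_abs]; exact hbd x)⟩
  have hii : ∀ a b : ℝ, IntervalIntegrable g volume a b := fun a b => hgint.intervalIntegrable
  rw [integral_Icc_eq_integral_Ioc, integral_Icc_eq_integral_Ioc,
    ← intervalIntegral.integral_of_le (zero_le_one), ← intervalIntegral.integral_of_le zero_le_one]
  rw [intervalIntegral.integral_comp_mul_sub g hvne (i:ℝ)]
  have he1 : (v:ℝ) * 0 - i = -(i:ℝ) := by ring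
  have he2 : (v:ℝ) * 1 - i = (v:ℝ) - i := by ring
  rw [he1, he2]
  have hle1 : -(i:ℝ) ≤ 0 := neg_nonpos.mpr (Nat.cast_nonneg i)
  have hle2 : (1:ℝ) ≤ (v:ℝ) - i := by
    have : (i:ℝ) + 1 ≤ v := by exact_mod_cast Nat.succ_le_of_lt hi
    linarith
  have hz1 : ∫ x in (-(i:ℝ))..0, g x = 0 := by
    rw [intervalIntegral.integral_of_le hle1, integral_Ioc_eq_integral_Ioo]
    rw [setIntegral_congr_fun measurableSet_Ioo
      (fun x hx => hsupp x (by simp only [Set.mem_Icc, not_and_or, not_le]; left; exact hx.2))]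
    simp
  have hz2 : ∫ x in (1:ℝ)..((v:ℝ) - i), g x = 0 := by
    rw [intervalIntegral.integral_of_le hle2, integral_Ioc_eq_integral_Ioo]
    rw [setIntegral_congr_fun measurableSet_Ioo
      (fun x hx => hsupp x (by simp only [Set.mem_Icc, not_and_or, not_le]; right; exact hx.1))]
    simp
  have hsplit1 : ∫ x in (-(i:ℝ))..((v:ℝ) - i), g x
      = (∫ x in (-(i:ℝ))..0, g x) + ∫ x in (0:ℝ)..((v:ℝ) - i), g x :=
    (intervalIntegral.integral_add_adjacent_intervals (hii _ _) (hii _ _)).symm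
  have hsplit2 : ∫ x in (0:ℝ)..((v:ℝ) - i), g x
      = (∫ x in (0:ℝ)..1, g x) + ∫ x in (1:ℝ)..((v:ℝ) - i), g x :=
    (intervalIntegral.integral_add_adjacent_intervals (hii _ _) (hii _ _)).symm
  rw [hsplit1, hsplit2, hz1, hz2, zero_add, add_zero, smul_eq_mul]

lemma core_bound (T : ℝ → ℝ) (B : ℝ)
    (hT1 : Differentiable ℝ T) (hT2 : Differentiable ℝ (deriv T))
    (hT3 : Differentiable ℝ (deriv (deriv T)))
    (hT3bd : ∀ u ∈ Set.Icc (0:ℝ) 2, |deriv (deriv (deriv T)) u| ≤ B)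
    (h : ℝ → ℝ) (hmeas : Measurable h) (Ch : ℝ) (hCh : ∀ x, |h x| ≤ Ch)
    (hsupp : ∀ x : ℝ, x ∉ Set.Icc (0:ℝ) 1 → h x = 0)
    (c : ℝ) (hc : 0 < c)
    (hint0 : (∫ x in Set.Icc (0:ℝ) 1, h x) = 0)
    (hint2 : (∫ x in Set.Icc (0:ℝ) 1, h x ^ 2) = c)
    (v : ℕ) (hv : 1 ≤ v) (ε : ℝ) (hε : 0 < ε)
    (hChε : Ch * ε ≤ 1) (hBChε : B * Ch * ε ≤ deriv (deriv T) 1 / 4)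
    (a : Fin v → ℝ) (ha : ∀ i, a i = 1 ∨ a i = -1) :
    c * deriv (deriv T) 1 / 4 * ε ^ 2 ≤
      ∫ x in Set.Icc (0:ℝ) 1, (T (1 + ∑ i : Fin v, a i * ε * h ((v:ℝ) * x - (i:ℕ))) - T 1) := by
  have hB0 : 0 ≤ B := le_trans (abs_nonneg _) (hT3bd 1 (by norm_num))
  have hCh0 : 0 ≤ Ch := le_trans (abs_nonneg _) (hCh 0)
  have hv0 : (0:ℝ) < v := by exact_mod_cast hv
  have hvne : (v:ℝ) ≠ 0 := ne_of_gt hv0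
  have htay := taylor_cube_bound T B hT1 hT2 hT3 hT3bd
  have hai : ∀ i, |a i| = 1 := fun i => by rcases ha i with h1 | h1 <;> simp [h1]
  haveI : Fact (volume (Set.Icc (0:ℝ) 1) < ⊤) := ⟨by simp [Real.volume_Icc]⟩
  set f : ℝ → ℝ := fun x => ∑ i : Fin v, a i * ε * h ((v:ℝ) * x - (i:ℕ)) with hfdef
  set R : ℝ → ℝ := fun t => T (1 + t) - T 1 - deriv T 1 * t - deriv (deriv T) 1 / 2 * t ^ 2
    with hRdef
  -- measurability
  have hhm : ∀ i : Fin v, Measurable (fun x : ℝ => h ((v:ℝ) * x - (i:ℕ))) := fun i =>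
    hmeas.comp ((measurable_id.const_mul (v:ℝ)).sub measurable_const)
  have hFm : ∀ i : Fin v, Measurable (fun x : ℝ => a i * ε * h ((v:ℝ) * x - (i:ℕ))) :=
    fun i => (hhm i).const_mul _
  have hfm : Measurable f := by
    simp only [hfdef]
    exact Finset.measurable_sum _ fun i _ => hFm i
  -- integrability helper
  have hIbdd : ∀ (F : ℝ → ℝ), Measurable F → ∀ C : ℝ,
      (∀ᵐ x ∂(volume.restrict (Set.Icc (0:ℝ) 1)), |F x| ≤ C) →
      IntegrableOn F (Set.Icc (0:ℝ) 1) := fun F hFm' C hC =>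
    ⟨hFm'.aestronglyMeasurable.restrict,
      HasFiniteIntegral.of_bounded (C := C) (by simpa [Real.norm_eq_abs] using hC)⟩
  have hFint : ∀ i : Fin v,
      IntegrableOn (fun x => a i * ε * h ((v:ℝ) * x - (i:ℕ))) (Set.Icc (0:ℝ) 1) := fun i =>
    hIbdd _ (hFm i) (ε * Ch) (ae_of_all _ fun x => by
      rw [abs_mul, abs_mul, hai i, one_mul, abs_of_pos hε]
      exact mul_le_mul_of_nonneg_left (hCh _) hε.le)
  -- a.e. disjointness
  have hae : ∀ᵐ x ∂(volume.restrict (Set.Icc (0:ℝ) 1)), ∀ i j : Fin v, i ≠ j →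
      h ((v:ℝ) * x - (i:ℕ)) * h ((v:ℝ) * x - (j:ℕ)) = 0 := by
    refine ae_restrict_of_ae ?_
    have hDzero : volume (⋃ k ∈ Finset.range (v+1), {((k:ℝ)/(v:ℝ))}) = 0 := by
      refine Set.Finite.measure_zero ?_ _
      exact Set.Finite.biUnion (Finset.range (v+1)).finite_toSet
        (fun _ _ => Set.finite_singleton _)
    filter_upwards [measure_eq_zero_iff_ae_notMem.mp hDzero] with x hx i j hij
    by_contra hcon
    have h1 : h ((v:ℝ) * x - (i:ℕ)) ≠ 0 := fun e => hcon (by rw [e, zero_mul])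
    have h2 : h ((v:ℝ) * x - (j:ℕ)) ≠ 0 := fun e => hcon (by rw [e, mul_zero])
    have m1 : (v:ℝ) * x - (i:ℕ) ∈ Set.Icc (0:ℝ) 1 := by
      by_contra hm; exact h1 (hsupp _ hm)
    have m2 : (v:ℝ) * x - (j:ℕ) ∈ Set.Icc (0:ℝ) 1 := by
      by_contra hm; exact h2 (hsupp _ hm)
    have hij' : (i:ℕ) ≠ (j:ℕ) := fun e => hij (Fin.ext e)
    apply hx
    have claim : ∀ p q : Fin v, (p:ℕ) < (q:ℕ) →
        (v:ℝ) * x - (p:ℕ) ∈ Set.Icc (0:ℝ) 1 → (v:ℝ) * x - (q:ℕ) ∈ Set.Icc (0:ℝ) 1 →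
        x ∈ ⋃ k ∈ Finset.range (v+1), {((k:ℝ)/(v:ℝ))} := by
      intro p q hpq mp mq
      have hcast : ((p:ℕ):ℝ) + 1 ≤ ((q:ℕ):ℝ) := by exact_mod_cast Nat.succ_le_of_lt hpq
      have e1 : (v:ℝ) * x = ((q:ℕ):ℝ) := by
        have := mp.2; have := mq.1; linarith
      refine Set.mem_biUnion (Finset.mem_range.mpr (Nat.lt_succ_of_lt q.isLt)) ?_
      rw [Set.mem_singleton_iff, eq_div_iff hvne]
      linarith [e1]
    rcases hij'.lt_or_gt with hlt | hlt
    · exact claim i j hlt m1 m2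
    · exact claim j i hlt m2 m1
  -- a.e. pointwise facts about f
  have hfsq_ae : ∀ᵐ x ∂(volume.restrict (Set.Icc (0:ℝ) 1)),
      f x ^ 2 = ∑ i : Fin v, ε ^ 2 * h ((v:ℝ) * x - (i:ℕ)) ^ 2 := by
    filter_upwards [hae] with x hx
    simp only [hfdef]
    rw [sq_sum_of_mul_eq_zero _ (fun i j hij => by
      have hzz := hx i j hij
      calc a i * ε * h ((v:ℝ) * x - (i:ℕ)) * (a j * ε * h ((v:ℝ) * x - (j:ℕ)))
          = a i * ε * (a j * ε) * (h ((v:ℝ) * x - (i:ℕ)) * h ((v:ℝ) * x - (j:ℕ))) := by ring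
        _ = 0 := by rw [hzz, mul_zero])]
    refine Finset.sum_congr rfl fun i _ => ?_
    have ha2 : (a i) ^ 2 = 1 := by rcases ha i with h1 | h1 <;> simp [h1]
    calc (a i * ε * h ((v:ℝ) * x - (i:ℕ))) ^ 2
        = (a i) ^ 2 * (ε ^ 2 * h ((v:ℝ) * x - (i:ℕ)) ^ 2) := by ring
      _ = ε ^ 2 * h ((v:ℝ) * x - (i:ℕ)) ^ 2 := by rw [ha2, one_mul]
  have hfabs_ae : ∀ᵐ x ∂(volume.restrict (Set.Icc (0:ℝ) 1)), |f x| ≤ Ch * ε := by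
    filter_upwards [hae] with x hx
    simp only [hfdef]
    refine abs_sum_le_of_mul_eq_zero _ _ (by positivity) (fun i j hij => by
      have hzz := hx i j hij
      calc a i * ε * h ((v:ℝ) * x - (i:ℕ)) * (a j * ε * h ((v:ℝ) * x - (j:ℕ)))
          = a i * ε * (a j * ε) * (h ((v:ℝ) * x - (i:ℕ)) * h ((v:ℝ) * x - (j:ℕ))) := by ring
        _ = 0 := by rw [hzz, mul_zero]) (fun i => ?_)
    rw [abs_mul, abs_mul, hai i, one_mul, abs_of_pos hε]
    calc ε * |h ((v:ℝ) * x - (i:ℕ))| ≤ ε * Ch := mul_le_mul_of_nonneg_left (hCh _) hε.le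
      _ = Ch * ε := mul_comm _ _
  -- integrability of f, f², R∘f
  have hf_int : IntegrableOn f (Set.Icc (0:ℝ) 1) := by
    simp only [hfdef]
    exact integrable_finset_sum _ fun i _ => hFint i
  have hfsq_int : IntegrableOn (fun x => f x ^ 2) (Set.Icc (0:ℝ) 1) :=
    hIbdd _ (hfm.pow_const 2) ((Ch * ε) ^ 2) (by
      filter_upwards [hfabs_ae] with x hx
      calc |f x ^ 2| = |f x| ^ 2 := abs_pow _ _
        _ ≤ (Ch * ε) ^ 2 := pow_le_pow_left₀ (abs_nonneg _) hx 2)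
  have hRm : Measurable R := by
    simp only [hRdef]
    exact (((hT1.continuous.measurable.comp (measurable_const.add measurable_id)).sub
      measurable_const).sub (measurable_id.const_mul _)).sub
      ((measurable_id.pow_const 2).const_mul _)
  have hR_ae : ∀ᵐ x ∂(volume.restrict (Set.Icc (0:ℝ) 1)),
      |R (f x)| ≤ B * Ch * ε * f x ^ 2 := by
    filter_upwards [hfabs_ae] with x hx
    have h1 : |f x| ≤ 1 := le_trans hx hChε
    calc |R (f x)| ≤ B * |f x| ^ 3 := htay (f x) h1
      _ = B * |f x| * f x ^ 2 := by rw [← sq_abs]; ring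
      _ ≤ B * (Ch * ε) * f x ^ 2 :=
        mul_le_mul_of_nonneg_right (mul_le_mul_of_nonneg_left hx hB0) (sq_nonneg _)
      _ = B * Ch * ε * f x ^ 2 := by ring
  have hR_int : IntegrableOn (fun x => R (f x)) (Set.Icc (0:ℝ) 1) :=
    hIbdd _ (hRm.comp hfm) (B * Ch * ε * (Ch * ε) ^ 2) (by
      filter_upwards [hR_ae, hfabs_ae] with x hx1 hx2
      refine le_trans hx1 (mul_le_mul_of_nonneg_left ?_ (by positivity))
      calc f x ^ 2 = |f x| ^ 2 := (sq_abs _).symm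
        _ ≤ (Ch * ε) ^ 2 := pow_le_pow_left₀ (abs_nonneg _) hx2 2)
  -- integral of f is zero
  have hint_f : ∫ x in Set.Icc (0:ℝ) 1, f x = 0 := by
    simp only [hfdef]
    rw [integral_finset_sum _ fun i _ => hFint i]
    refine Finset.sum_eq_zero fun i _ => ?_
    rw [MeasureTheory.integral_const_mul,
      scaled_integral h hmeas Ch hCh hsupp v hv (i:ℕ) i.isLt, hint0, mul_zero, mul_zero]
  -- integral of f² is c ε²
  have hint_fsq : ∫ x in Set.Icc (0:ℝ) 1, f x ^ 2 = c * ε ^ 2 := by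
    rw [integral_congr_ae hfsq_ae]
    have hsqint : ∀ i : Fin v,
        IntegrableOn (fun x => ε ^ 2 * h ((v:ℝ) * x - (i:ℕ)) ^ 2) (Set.Icc (0:ℝ) 1) := fun i =>
      hIbdd _ (((hhm i).pow_const 2).const_mul _) (ε ^ 2 * Ch ^ 2) (ae_of_all _ fun x => by
        rw [abs_mul, abs_pow, abs_pow, abs_of_pos hε]
        exact mul_le_mul_of_nonneg_left (pow_le_pow_left₀ (abs_nonneg _) (hCh _) 2)
          (by positivity))
    rw [integral_finset_sum _ fun i _ => hsqint i]
    have hone : ∀ i : Fin v,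
        ∫ x in Set.Icc (0:ℝ) 1, ε ^ 2 * h ((v:ℝ) * x - (i:ℕ)) ^ 2 = ε ^ 2 * ((v:ℝ)⁻¹ * c) := by
      intro i
      rw [MeasureTheory.integral_const_mul,
        scaled_integral (fun y => h y ^ 2) (hmeas.pow_const 2) (Ch ^ 2)
          (fun x => by rw [abs_pow]; exact pow_le_pow_left₀ (abs_nonneg _) (hCh _) 2)
          (fun x hx => by show h x ^ 2 = 0; rw [hsupp x hx]; ring) v hv (i:ℕ) i.isLt, hint2]
    rw [Finset.sum_congr rfl fun i _ => hone i, Finset.sum_const, Finset.card_univ,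
      Fintype.card_fin, nsmul_eq_mul]
    field_simp
  -- decomposition
  have hdecomp : (fun x => T (1 + f x) - T 1)
      = fun x => (deriv T 1 * f x + deriv (deriv T) 1 / 2 * f x ^ 2) + R (f x) := by
    funext x
    simp only [hRdef]
    ring
  have hsum_int : IntegrableOn
      (fun x => deriv T 1 * f x + deriv (deriv T) 1 / 2 * f x ^ 2) (Set.Icc (0:ℝ) 1) :=
    (hf_int.const_mul _).add (hfsq_int.const_mul _)
  have hEq : ∫ x in Set.Icc (0:ℝ) 1, (T (1 + f x) - T 1)
      = deriv (deriv T) 1 / 2 * (c * ε ^ 2) + ∫ x in Set.Icc (0:ℝ) 1, R (f x) := by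
    rw [hdecomp, integral_add hsum_int hR_int,
      integral_add (hf_int.const_mul _) (hfsq_int.const_mul _),
      MeasureTheory.integral_const_mul, MeasureTheory.integral_const_mul,
      hint_f, hint_fsq, mul_zero, zero_add]
  have hErr : |∫ x in Set.Icc (0:ℝ) 1, R (f x)| ≤ B * Ch * ε * (c * ε ^ 2) := by
    have h1 := norm_integral_le_of_norm_le (hfsq_int.const_mul (B * Ch * ε))
      (by filter_upwards [hR_ae] with x hx; rw [Real.norm_eq_abs]; exact hx)
    rwa [Real.norm_eq_abs, MeasureTheory.integral_const_mul, hint_fsq] at h1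
  have h2 : B * Ch * ε * (c * ε ^ 2) ≤ deriv (deriv T) 1 / 4 * (c * ε ^ 2) :=
    mul_le_mul_of_nonneg_right hBChε (by positivity)
  have h3 := (abs_le.mp hErr).1
  have hgoal : (∫ x in Set.Icc (0:ℝ) 1,
        (T (1 + ∑ i : Fin v, a i * ε * h ((v:ℝ) * x - (i:ℕ))) - T 1))
      = ∫ x in Set.Icc (0:ℝ) 1, (T (1 + f x) - T 1) := rfl
  have hid : c * deriv (deriv T) 1 / 4 * ε ^ 2
      = deriv (deriv T) 1 / 2 * (c * ε ^ 2) - deriv (deriv T) 1 / 4 * (c * ε ^ 2) := by ring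
  rw [hgoal, hEq]
  linarith

/-- Separation of functional values in the lower-bound construction. -/
theorem separation_of_functional_values (T : ℝ → ℝ) (B : ℝ)
    (hT1 : Differentiable ℝ T)
    (hT2 : Differentiable ℝ (deriv T))
    (hT3 : Differentiable ℝ (deriv (deriv T)))
    (hT3bd : ∀ u ∈ Set.Icc (0:ℝ) 2, |deriv (deriv (deriv T)) u| ≤ B)
    (hT'' : 0 < deriv (deriv T) 1)
    (h : ℝ → ℝ) (hmeas : Measurable h) (hbdd : ∃ Ch : ℝ, ∀ x : ℝ, |h x| ≤ Ch)
    (hsupp : ∀ x : ℝ, x ∉ Set.Icc (0:ℝ) 1 → h x = 0)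
    (c : ℝ) (hc : 0 < c)
    (hint0 : (∫ x in Set.Icc (0:ℝ) 1, h x) = 0)
    (hint2 : (∫ x in Set.Icc (0:ℝ) 1, h x ^ 2) = c)
    (β : ℝ) (hβ : β ∈ Set.Ioo (0:ℝ) 1) :
    ∃ CT > 0, ∃ v0 : ℕ, ∀ v : ℕ, v0 ≤ v →
      ∀ a : Fin v → ℝ, (∀ i : Fin v, a i = 1 ∨ a i = -1) →
        CT * (v : ℝ) ^ (-(2 * β)) ≤
          ∫ x in Set.Icc (0:ℝ) 1,
            (T (1 + ∑ i : Fin v, a i * (v : ℝ) ^ (-β) * h ((v : ℝ) * x - (i : ℕ))) - T 1) := by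
  obtain ⟨Ch, hCh⟩ := hbdd
  have hCh0 : 0 ≤ Ch := le_trans (abs_nonneg _) (hCh 0)
  have hB0 : 0 ≤ B := le_trans (abs_nonneg _) (hT3bd 1 (by norm_num))
  refine ⟨c * deriv (deriv T) 1 / 4, by positivity, ?_⟩
  set δ : ℝ := min ((Ch + 1)⁻¹) (deriv (deriv T) 1 / (4 * (B * Ch + 1))) with hδdef
  have hδ : 0 < δ := lt_min (by positivity) (by positivity)
  have htend : Tendsto (fun v : ℕ => (v:ℝ) ^ (-β)) atTop (nhds 0) :=
    (tendsto_rpow_neg_atTop hβ.1).comp tendsto_natCast_atTop_atTop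
  have hev : ∀ᶠ v : ℕ in atTop, (v:ℝ) ^ (-β) < δ := htend.eventually (gt_mem_nhds hδ)
  obtain ⟨v1, hv1⟩ := eventually_atTop.mp hev
  refine ⟨max v1 1, ?_⟩
  intro v hv a ha
  have hvge1 : 1 ≤ v := le_trans (le_max_right _ _) hv
  have hv0 : (0:ℝ) < v := by exact_mod_cast hvge1
  set ε : ℝ := (v:ℝ) ^ (-β) with hεdef
  have hε0 : 0 < ε := Real.rpow_pos_of_pos hv0 _
  have hεδ : ε < δ := hv1 v (le_trans (le_max_left _ _) hv)
  have hChε : Ch * ε ≤ 1 := by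
    have h1 : ε ≤ (Ch + 1)⁻¹ := le_of_lt (lt_of_lt_of_le hεδ (min_le_left _ _))
    have h2 : Ch * ε ≤ Ch * (Ch + 1)⁻¹ := mul_le_mul_of_nonneg_left h1 hCh0
    have h3 : Ch * (Ch + 1)⁻¹ ≤ 1 := by
      rw [← div_eq_mul_inv, div_le_one (by positivity)]; linarith
    linarith
  have hBChε : B * Ch * ε ≤ deriv (deriv T) 1 / 4 := by
    have h1 : ε ≤ deriv (deriv T) 1 / (4 * (B * Ch + 1)) :=
      le_of_lt (lt_of_lt_of_le hεδ (min_le_right _ _))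
    have h2 : B * Ch * ε ≤ B * Ch * (deriv (deriv T) 1 / (4 * (B * Ch + 1))) :=
      mul_le_mul_of_nonneg_left h1 (by positivity)
    have h3 : B * Ch * (deriv (deriv T) 1 / (4 * (B * Ch + 1))) ≤ deriv (deriv T) 1 / 4 := by
      rw [mul_div_assoc', div_le_div_iff₀ (show (0:ℝ) < 4 * (B * Ch + 1) by positivity)
        (show (0:ℝ) < 4 by norm_num)]
      nlinarith [mul_nonneg hB0 hCh0, hT''.le, mul_nonneg (mul_nonneg hB0 hCh0) hT''.le]
    linarith
  have hε2 : (v:ℝ) ^ (-(2 * β)) = ε ^ 2 := by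
    rw [hεdef, ← Real.rpow_natCast ((v:ℝ) ^ (-β)) 2, ← Real.rpow_mul hv0.le]
    norm_num
    ring_nf
  rw [hε2]
  exact core_bound T B hT1 hT2 hT3 hT3bd h hmeas Ch hCh hsupp c hc hint0 hint2
    v hvge1 ε hε0 hChε hBChε a ha
end
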